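/- arXiv:1602.02915 — 3 statements merged into one kernel-verified Lean document; each statement's English description precedes it below -/
import Mathlib

section
/- Let A ∈ ℝ^{m×n}, b ∈ ℝ^m, λ > 0 and θ > 0, and let r : ℝ → ℝ be the MCP penalty: r(t) = λ|t| − t²/(2θ) if |t| ≤ θλ; r(t) = θλ²/2 if |t| > θλ. Then the function f(x) = (1/2)‖Ax − b‖² + Σ_{i=1}^n r(x_i) is a KL function with exponent 1/2. -/
open Filter Topology Metric Set
open scoped RealInnerProductSpace

noncomputable section

variable {E : Type*} [NormedAddCommGroup E] [InnerProductSpace ℝ E]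

/-- The effective domain of an extended-real-valued function. -/
def edomain (f : E → EReal) : Set E := {x | f x < ⊤}

/-- A proper function: never `⊥` and not identically `⊤`. -/
def ProperFn (f : E → EReal) : Prop := (∀ x, f x ≠ ⊥) ∧ ∃ x, f x < ⊤

/-- The regular (Fréchet) subdifferential. -/
def regSubdiff (f : E → EReal) (x : E) : Set E :=
  {v | f x < ⊤ ∧ ∀ ε : ℝ, 0 < ε →
    ∀ᶠ z in 𝓝 x, f x + ((⟪v, z - x⟫ - ε * ‖z - x‖ : ℝ) : EReal) ≤ f z}

/-- The limiting (Mordukhovich) subdifferential. -/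
def limSubdiff (f : E → EReal) (x : E) : Set E :=
  {v | f x < ⊤ ∧ ∃ (xs vs : ℕ → E),
    Tendsto xs atTop (𝓝 x) ∧ Tendsto (fun t => f (xs t)) atTop (𝓝 (f x)) ∧
    Tendsto vs atTop (𝓝 v) ∧ ∀ t, vs t ∈ regSubdiff f (xs t)}

/-- The domain of the limiting subdifferential. -/
def subdiffDom (f : E → EReal) : Set E := {x | (limSubdiff f x).Nonempty}

/-- `f` satisfies the KL property at `xbar` with exponent `α`. -/
def KLAt (f : E → EReal) (xbar : E) (α : ℝ) : Prop :=
  ∃ c > (0:ℝ), ∃ ε > (0:ℝ), ∃ ν : EReal, 0 < ν ∧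
    ∀ x : E, ‖x - xbar‖ ≤ ε → f xbar < f x → f x < f xbar + ν →
      ENNReal.ofReal (c * (f x - f xbar).toReal ^ α) ≤ EMetric.infEdist 0 (limSubdiff f x)

/-- `f` is a KL function with exponent `α`. -/
def IsKL (f : E → EReal) (α : ℝ) : Prop := ∀ x ∈ subdiffDom f, KLAt f x α

open Classical in
/-- Indicator function of a set. -/
def indic (C : Set E) : E → EReal := fun x => if x ∈ C then 0 else ⊤

/-- `w` is the proximal point of `P` at `z`. -/
def IsProxPt (P : E → EReal) (z w : E) : Prop :=
  ∀ y : E, P w + ((1/2 * ‖w - z‖^2 : ℝ) : EReal) ≤ P y + ((1/2 * ‖y - z‖^2 : ℝ) : EReal)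

/-- A polyhedral set: a finite intersection of closed half-spaces. -/
def IsPolyhedralSet {F : Type*} [AddCommGroup F] [Module ℝ F] (S : Set F) : Prop :=
  ∃ (k : ℕ) (φ : Fin k → (F →ₗ[ℝ] ℝ)) (b : Fin k → ℝ), S = {x | ∀ i, φ i x ≤ b i}

/-- A proper closed polyhedral function: proper, closed, with polyhedral epigraph. -/
def IsPolyhedralFn (P : E → EReal) : Prop :=
  ProperFn P ∧ LowerSemicontinuous P ∧
    IsPolyhedralSet {p : E × ℝ | P p.1 ≤ (p.2 : EReal)}

/-- Convexity of an extended-real-valued function, via convexity of its epigraph. -/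
def EConvex (f : E → EReal) : Prop := Convex ℝ {p : E × ℝ | f p.1 ≤ (p.2 : EReal)}


open Classical in
/-- The MCP penalty function with parameters `lam > 0` and `θ > 0`. -/
def mcp (lam θ t : ℝ) : ℝ :=
  if |t| ≤ θ * lam then lam * |t| - t^2 / (2*θ)
  else θ * lam^2 / 2


namespace S16

/-- derivative of `fun a => (max a 0)^2` -/
lemma hasDerivAt_maxsq (a : ℝ) : HasDerivAt (fun a : ℝ => max a 0 ^ 2) (2 * max a 0) a := by
  rcases lt_trichotomy a 0 with h | h | h
  · have hev : (fun a : ℝ => max a 0 ^ 2) =ᶠ[𝓝 a] fun _ => (0:ℝ) := by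
      filter_upwards [Iio_mem_nhds h] with b hb
      simp [max_eq_right (le_of_lt (mem_Iio.mp hb))]
    have h0 : HasDerivAt (fun _ : ℝ => (0:ℝ)) 0 a := hasDerivAt_const _ _
    rw [max_eq_right h.le, mul_zero]
    exact h0.congr_of_eventuallyEq hev
  · subst h
    rw [hasDerivAt_iff_isLittleO, Asymptotics.isLittleO_iff]
    intro c hc
    filter_upwards [Metric.ball_mem_nhds (0:ℝ) hc] with b hb
    simp only [Real.norm_eq_abs, mem_ball, dist_zero_right, Real.norm_eq_abs] at *
    have h1 : |max b 0| ≤ |b| := by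
      rcases le_total b 0 with h | h
      · simp [max_eq_right h]
      · simp [max_eq_left h, abs_of_nonneg h]
    simp only [smul_eq_mul]
    have : |max b 0 ^ 2 - max 0 0 ^ 2 - (b - 0) * (2 * max 0 0)| = |max b 0| ^ 2 := by
      simp [sq_abs]
    rw [this, sub_zero]
    calc |max b 0| ^ 2 = |max b 0| * |max b 0| := sq (|max b 0|) ▸ by ring
      _ ≤ c * |b| := mul_le_mul (h1.trans hb.le) h1 (abs_nonneg _) hc.le
  · have hev : (fun a : ℝ => max a 0 ^ 2) =ᶠ[𝓝 a] fun b => b ^ 2 := by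
      filter_upwards [Ioi_mem_nhds h] with b hb
      simp [max_eq_left (le_of_lt (mem_Ioi.mp hb))]
    have h0 : HasDerivAt (fun b : ℝ => b ^ 2) (2 * a) a := by
      simpa using (hasDerivAt_pow 2 a)
    rw [max_eq_left h.le]
    exact h0.congr_of_eventuallyEq hev

variable {lam θ : ℝ}

/-- smooth part of mcp: mcp minus lam * |t| -/
def mq (lam θ t : ℝ) : ℝ := mcp lam θ t - lam * |t|

/-- derivative of mq -/
def mqd (lam θ t : ℝ) : ℝ := -(max (min t (θ*lam)) (-(θ*lam))) / θ

lemma mq_eq (hlam : 0 < lam) (hθ : 0 < θ) (t : ℝ) :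
    mq lam θ t = -t^2/(2*θ) + (max (|t| - θ*lam) 0)^2 / (2*θ) := by
  have htl : 0 < θ * lam := mul_pos hθ hlam
  unfold mq mcp
  split_ifs with h
  · rw [max_eq_right (by linarith)]
    ring
  · push_neg at h
    rw [max_eq_left (by linarith)]
    have h2 : |t|^2 = t^2 := sq_abs t
    field_simp
    nlinarith [sq_abs t]

lemma hasDerivAt_mq (hlam : 0 < lam) (hθ : 0 < θ) (t : ℝ) :
    HasDerivAt (mq lam θ) (mqd lam θ t) t := by
  have htl : 0 < θ * lam := mul_pos hθ hlam
  have hfun : ∀ s, mq lam θ s = -s^2/(2*θ) + (max (|s| - θ*lam) 0)^2 / (2*θ) :=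
    mq_eq hlam hθ
  rcases eq_or_ne t 0 with rfl | ht
  · -- near 0, mq = -s^2/(2θ)
    have hev : mq lam θ =ᶠ[𝓝 (0:ℝ)] fun s => -s^2/(2*θ) := by
      filter_upwards [Metric.ball_mem_nhds (0:ℝ) htl] with s hs
      rw [hfun s, max_eq_right]
      · ring
      · rw [mem_ball, dist_zero_right, Real.norm_eq_abs] at hs
        linarith
    have h0 : HasDerivAt (fun s : ℝ => -s^2/(2*θ)) 0 (0:ℝ) := by
      have := ((hasDerivAt_pow 2 (0:ℝ)).neg).div_const (2*θ)
      simpa using this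
    have hder := h0.congr_of_eventuallyEq hev
    have h00 : mqd lam θ 0 = 0 := by
      unfold mqd
      rw [min_eq_left htl.le, max_eq_left (by linarith), neg_zero, zero_div]
    rw [h00]
    exact hder
  · -- t ≠ 0 : abs differentiable
    have habs : HasDerivAt (fun s : ℝ => |s|) (Real.sign t) t := by
      rcases ht.lt_or_gt with h | h
      · have hev : (fun s : ℝ => |s|) =ᶠ[𝓝 t] fun s => -s := by
          filter_upwards [Iio_mem_nhds h] with s hs
          exact abs_of_neg (mem_Iio.mp hs)
        have h0 : HasDerivAt (fun s : ℝ => -s) (-1) t := (hasDerivAt_id t).neg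
        rw [Real.sign_of_neg h]
        exact h0.congr_of_eventuallyEq hev
      · have hev : (fun s : ℝ => |s|) =ᶠ[𝓝 t] fun s => s := by
          filter_upwards [Ioi_mem_nhds h] with s hs
          exact abs_of_pos (mem_Ioi.mp hs)
        have h0 : HasDerivAt (fun s : ℝ => s) 1 t := hasDerivAt_id t
        rw [Real.sign_of_pos h]
        exact h0.congr_of_eventuallyEq hev
    have hmax : HasDerivAt (fun s : ℝ => (max (|s| - θ*lam) 0)^2)
        (2 * max (|t| - θ*lam) 0 * Real.sign t) t := by
      have h1 : HasDerivAt (fun s : ℝ => |s| - θ*lam) (Real.sign t) t := habs.sub_const _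
      have := (hasDerivAt_maxsq (|t| - θ*lam)).comp t h1
      simpa [mul_comm, Function.comp_def] using this
    have h2 : HasDerivAt (fun s : ℝ => -s^2/(2*θ)) (-t/θ) t := by
      have := ((hasDerivAt_pow 2 t).neg).div_const (2*θ)
      exact this.congr_deriv (by field_simp; ring)
    have hsum := h2.add (hmax.div_const (2*θ))
    have heq : -t/θ + 2 * max (|t| - θ*lam) 0 * Real.sign t / (2*θ) = mqd lam θ t := by
      unfold mqd
      rcases ht.lt_or_gt with h | h
      · rw [Real.sign_of_neg h, abs_of_neg h]
        rcases le_total (-t) (θ*lam) with h3 | h3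
        · rw [max_eq_right (by linarith), min_eq_left (by linarith),
            max_eq_left (by linarith)]
          ring
        · rw [max_eq_left (by linarith), min_eq_left (by linarith),
            max_eq_right (by linarith)]
          field_simp
          ring
      · rw [Real.sign_of_pos h, abs_of_pos h]
        rcases le_total t (θ*lam) with h3 | h3
        · rw [max_eq_right (by linarith), min_eq_left h3, max_eq_left (by linarith)]
          ring
        · rw [max_eq_left (by linarith), min_eq_right h3, max_eq_left (by linarith)]
          field_simp
          ring
    rw [← heq]
    have hfe : mq lam θ =ᶠ[𝓝 t] (fun s => -s^2/(2*θ) + (max (|s| - θ*lam) 0)^2 / (2*θ)) :=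
      Eventually.of_forall hfun
    exact hsum.congr_of_eventuallyEq hfe

lemma continuous_mqd : Continuous (mqd lam θ) := by
  unfold mqd
  fun_prop

lemma mqd_of_abs_le {t : ℝ} (ht : |t| ≤ θ * lam) : mqd lam θ t = -t/θ := by
  unfold mqd
  rw [min_eq_left (le_of_abs_le ht), max_eq_left (neg_le_of_abs_le ht)]

lemma mqd_of_ge {t : ℝ} (ht : θ * lam ≤ t) (htl : 0 ≤ θ * lam) :
    mqd lam θ t = -(θ*lam)/θ := by
  unfold mqd
  rw [min_eq_right ht, max_eq_left (by linarith)]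

lemma mqd_of_le {t : ℝ} (ht : t ≤ -(θ * lam)) (htl : 0 ≤ θ * lam) :
    mqd lam θ t = (θ*lam)/θ := by
  unfold mqd
  rw [min_eq_left (by linarith), max_eq_right (by linarith), neg_neg]

end S16

namespace S16

/-- Core 1D lemma extracting subgradient bounds from the Fréchet inequality along a line. -/
lemma key1d {w D μ : ℝ} (hμ : 0 ≤ μ) {G : ℝ → ℝ}
    (hG : HasDerivAt G D 0)
    (H : ∀ ε : ℝ, 0 < ε → ∀ᶠ t in 𝓝 (0:ℝ), w * t - ε * |t| ≤ G t + μ * |t| - G 0) :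
    |w - D| ≤ μ := by
  have key : ∀ ε : ℝ, 0 < ε → |w - D| ≤ μ + ε := by
    intro ε hε
    have hε2 : 0 < ε/4 := by linarith
    have hlit : ∀ᶠ t in 𝓝 (0:ℝ), |G t - G 0 - t * D| ≤ ε/4 * |t| := by
      have := (hasDerivAt_iff_isLittleO.mp hG)
      have h2 := Asymptotics.isLittleO_iff.mp this hε2
      filter_upwards [h2] with t ht
      simpa [Real.norm_eq_abs, smul_eq_mul] using ht
    have hev := (H (ε/4) hε2).and hlit
    -- positive side
    obtain ⟨t, ⟨h1, h2⟩, ht⟩ :=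
      ((hev.filter_mono (nhdsWithin_le_nhds : 𝓝[>] (0:ℝ) ≤ 𝓝 0)).and
        self_mem_nhdsWithin).exists
    have ht0 : 0 < t := ht
    have habs : |t| = t := abs_of_pos ht0
    rw [habs] at h1 h2
    have h2' : G t - G 0 ≤ t * D + ε/4 * t := by
      have := abs_le.mp h2
      linarith [this.2]
    have hup : w ≤ D + μ + ε/2 := by
      nlinarith
    -- negative side
    obtain ⟨s, ⟨g1, g2⟩, hs⟩ :=
      ((hev.filter_mono (nhdsWithin_le_nhds : 𝓝[<] (0:ℝ) ≤ 𝓝 0)).and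
        self_mem_nhdsWithin).exists
    have hs0 : s < 0 := hs
    have habs' : |s| = -s := abs_of_neg hs0
    rw [habs'] at g1 g2
    have g2'' : G s - G 0 ≤ s * D + ε/4 * (-s) := by
      have := abs_le.mp g2
      linarith [this.2]
    have key2 : s * (w - D) ≤ (-s) * (μ + ε/2) := by nlinarith
    have hdown : D - μ - ε/2 ≤ w := by
      by_contra hc
      push_neg at hc
      have hc' : w - D < -(μ + ε/2) := by linarith
      have := mul_lt_mul_of_neg_right hc' hs0
      nlinarith
    rw [abs_le]
    constructor <;> linarith
  by_contra hcon
  push_neg at hcon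
  have := key ((|w - D| - μ)/2) (by linarith)
  linarith

end S16


namespace S16

variable {m n : ℕ}

local notation "En" => EuclideanSpace ℝ (Fin n)
local notation "Em" => EuclideanSpace ℝ (Fin m)

variable (A : EuclideanSpace ℝ (Fin n) →ₗ[ℝ] EuclideanSpace ℝ (Fin m))
  (b : EuclideanSpace ℝ (Fin m)) (lam θ : ℝ)

/-- The objective function. -/
def ff : EuclideanSpace ℝ (Fin n) → ℝ :=
  fun x => 1/2 * ‖A x - b‖^2 + ∑ i, mcp lam θ (x i)

/-- Gradient of the smooth part, coordinate `i`. -/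
def pd0 (i : Fin n) (x : EuclideanSpace ℝ (Fin n)) : ℝ :=
  ⟪A x - b, A (EuclideanSpace.single i (1:ℝ))⟫ + mqd lam θ (x i)

lemma hasDerivAt_quadpart (c d : EuclideanSpace ℝ (Fin m)) :
    HasDerivAt (fun t : ℝ => 1/2 * ‖c + t • d‖^2) (⟪c, d⟫) 0 := by
  have hfun : ∀ t : ℝ, 1/2 * ‖c + t • d‖^2
      = 1/2*‖c‖^2 + t * ⟪c, d⟫ + t^2 * (1/2*‖d‖^2) := by
    intro t
    rw [norm_add_sq_real, real_inner_smul_right, norm_smul]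
    simp [mul_pow, sq_abs]
    ring
  have h1 : HasDerivAt (fun t : ℝ => t * ⟪c, d⟫) (⟪c, d⟫) 0 := by
    simpa using (hasDerivAt_id (0:ℝ)).mul_const (⟪c, d⟫)
  have h2 : HasDerivAt (fun t : ℝ => t^2 * (1/2*‖d‖^2)) 0 0 := by
    simpa using (hasDerivAt_pow 2 (0:ℝ)).mul_const (1/2*‖d‖^2)
  have h3 := ((h1.const_add (1/2*‖c‖^2)).add h2)
  simp only [add_zero] at h3
  have hfe : (fun t : ℝ => 1/2*‖c‖^2 + t * ⟪c, d⟫ + t^2 * (1/2*‖d‖^2))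
      =ᶠ[𝓝 (0:ℝ)] (fun t : ℝ => 1/2 * ‖c + t • d‖^2) :=
    Filter.Eventually.of_forall fun t => (hfun t).symm
  exact h3.congr_of_eventuallyEq hfe.symm

/-- Structure of the regular subdifferential of `ff`. -/
lemma regSubdiff_struct (hlam : 0 < lam) (hθ : 0 < θ) {x v : EuclideanSpace ℝ (Fin n)}
    (hv : v ∈ regSubdiff (fun y => ((ff A b lam θ y : ℝ) : EReal)) x) (i : Fin n) :
    (x i ≠ 0 → v i = pd0 A b lam θ i x + lam * Real.sign (x i)) ∧
    (x i = 0 → |v i - pd0 A b lam θ i x| ≤ lam) := by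
  obtain ⟨-, hv⟩ := hv
  set e : EuclideanSpace ℝ (Fin n) := EuclideanSpace.single i (1:ℝ) with he
  set ι : ℝ → EuclideanSpace ℝ (Fin n) := fun t => x + t • e with hι
  have hι0 : ι 0 = x := by simp [hι]
  have hcont : Filter.Tendsto ι (𝓝 0) (𝓝 x) := by
    have : Continuous ι := by fun_prop
    simpa [hι0] using this.tendsto 0
  -- the line inequality
  have hline : ∀ ε : ℝ, 0 < ε → ∀ᶠ t in 𝓝 (0:ℝ),
      (v i) * t - ε * |t| ≤ ff A b lam θ (ι t) - ff A b lam θ x := by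
    intro ε hε
    have := hcont.eventually (hv ε hε)
    filter_upwards [this] with t ht
    have hz : ι t - x = t • e := by simp [hι]
    rw [hz] at ht
    have hin : ⟪v, t • e⟫ = t * v i := by
      rw [real_inner_smul_right, he, EuclideanSpace.inner_single_right]
      simp [mul_comm]
    have hnrm : ‖t • e‖ = |t| := by
      rw [norm_smul, he, EuclideanSpace.norm_single]
      simp
    rw [hin, hnrm] at ht
    have ht' : ff A b lam θ x + (t * v i - ε * |t|) ≤ ff A b lam θ (ι t) := by
      have := ht
      rw [← EReal.coe_add] at this
      exact_mod_cast this
    linarith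
  -- decompose ff along the line
  set c : EuclideanSpace ℝ (Fin m) := A x - b with hc
  set d : EuclideanSpace ℝ (Fin m) := A e with hd
  set C : ℝ := ∑ j ∈ Finset.univ \ {i}, mcp lam θ (x j) with hC
  have hdec : ∀ t : ℝ, ff A b lam θ (ι t)
      = 1/2 * ‖c + t • d‖^2 + (mq lam θ (x i + t) + lam * |x i + t| + C) := by
    intro t
    unfold ff
    congr 1
    · rw [hc, hd, hι]
      congr 2
      simp only [map_add, map_smul]
      abel
    · have hcoord : ∀ j, (ι t) j = if j = i then x i + t else x j := by
        intro j
        simp only [hι, PiLp.add_apply, PiLp.smul_apply, he, EuclideanSpace.single_apply,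
          smul_eq_mul]
        split_ifs with h
        · subst h; ring
        · ring
      have : ∀ j, mcp lam θ ((ι t) j) = if j = i then mcp lam θ (x i + t) else mcp lam θ (x j) := by
        intro j
        rw [hcoord j]
        split_ifs <;> rfl
      rw [Finset.sum_congr rfl (fun j _ => this j),
        Finset.sum_eq_sum_sdiff_singleton_add (Finset.mem_univ i)]
      simp only [eq_self_iff_true, if_true]
      have : ∑ j ∈ Finset.univ \ {i},
          (if j = i then mcp lam θ (x i + t) else mcp lam θ (x j)) = C := by
        rw [hC]
        apply Finset.sum_congr rfl
        intro j hj
        rw [if_neg (by simpa using (Finset.mem_sdiff.mp hj).2)]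
      rw [this]
      have hmcp : mcp lam θ (x i + t) = mq lam θ (x i + t) + lam * |x i + t| := by
        unfold mq; ring
      rw [hmcp]
      ring
  have hg0 : ff A b lam θ x = 1/2 * ‖c + (0:ℝ) • d‖^2 + (mq lam θ (x i + 0) + lam * |x i + 0| + C) := by
    rw [← hdec 0, hι0]
  -- derivative of smooth part
  have hq : HasDerivAt (fun t : ℝ => 1/2 * ‖c + t • d‖^2) (⟪c, d⟫) 0 :=
    hasDerivAt_quadpart c d
  have hshift : HasDerivAt (fun t : ℝ => x i + t) 1 0 := by
    simpa using (hasDerivAt_id (0:ℝ)).const_add (x i)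
  have hmq : HasDerivAt (fun t : ℝ => mq lam θ (x i + t)) (mqd lam θ (x i)) 0 := by
    have := (hasDerivAt_mq hlam hθ (x i + 0)).comp 0 hshift
    simpa [Function.comp_def] using this
  constructor
  · -- x i ≠ 0
    intro hxi
    have habs : HasDerivAt (fun t : ℝ => lam * |x i + t|) (lam * Real.sign (x i)) 0 := by
      have habs0 : HasDerivAt (fun s : ℝ => |s|) (Real.sign (x i)) (x i + 0) := by
        rw [add_zero]
        rcases hxi.lt_or_gt with h | h
        · have hev : (fun s : ℝ => |s|) =ᶠ[𝓝 (x i)] fun s => -s := by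
            filter_upwards [Iio_mem_nhds h] with s hs
            exact abs_of_neg (mem_Iio.mp hs)
          rw [Real.sign_of_neg h]
          exact ((hasDerivAt_id (x i)).neg).congr_of_eventuallyEq hev
        · have hev : (fun s : ℝ => |s|) =ᶠ[𝓝 (x i)] fun s => s := by
            filter_upwards [Ioi_mem_nhds h] with s hs
            exact abs_of_pos (mem_Ioi.mp hs)
          rw [Real.sign_of_pos h]
          exact (hasDerivAt_id (x i)).congr_of_eventuallyEq hev
      have := (habs0.comp 0 hshift).const_mul lam
      simpa using this
    have hG : HasDerivAt (fun t => ff A b lam θ (ι t))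
        (⟪c, d⟫ + mqd lam θ (x i) + lam * Real.sign (x i)) 0 := by
      have h := (hq.add ((hmq.add habs).add_const C))
      have hfe : (fun t : ℝ => 1/2 * ‖c + t • d‖^2 + (mq lam θ (x i + t) + lam * |x i + t| + C))
          =ᶠ[𝓝 (0:ℝ)] (fun t => ff A b lam θ (ι t)) :=
        Filter.Eventually.of_forall fun t => (hdec t).symm
      have h2 := h.congr_of_eventuallyEq hfe.symm
      exact h2.congr_deriv (by ring)
    have hkey := key1d (w := v i) (le_refl (0:ℝ)) hG ?_
    · have h0 : v i - (⟪c, d⟫ + mqd lam θ (x i) + lam * Real.sign (x i)) = 0 :=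
        abs_eq_zero.mp (le_antisymm hkey (abs_nonneg _))
      unfold pd0
      rw [← hc, ← hd]
      linarith
    · intro ε hε
      filter_upwards [hline ε hε] with t ht
      have : ff A b lam θ (ι 0) = ff A b lam θ x := by rw [hι0]
      rw [← this] at ht
      linarith [ht]
  · -- x i = 0
    intro hxi
    have hG : HasDerivAt (fun t : ℝ => 1/2 * ‖c + t • d‖^2 + (mq lam θ (x i + t) + C))
        (⟪c, d⟫ + mqd lam θ (x i)) 0 := by
      have h := (hq.add (hmq.add_const C))
      exact h
    have hkey := key1d (w := v i) hlam.le hG ?_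
    · unfold pd0
      rw [← hc, ← hd] at *
      exact hkey
    · intro ε hε
      filter_upwards [hline ε hε] with t ht
      have heq : ff A b lam θ (ι t) - ff A b lam θ x
          = (1/2 * ‖c + t • d‖^2 + (mq lam θ (x i + t) + C)) + lam * |t|
            - (1/2 * ‖c + (0:ℝ) • d‖^2 + (mq lam θ (x i + 0) + C)) := by
      -- uses x i = 0
        rw [hdec t, hg0, hxi]
        simp only [zero_add, add_zero, abs_zero, mul_zero]
        ring
      rw [heq] at ht
      linarith [ht]

end S16

namespace S16

variable {m n : ℕ} (A : EuclideanSpace ℝ (Fin n) →ₗ[ℝ] EuclideanSpace ℝ (Fin m))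
  (b : EuclideanSpace ℝ (Fin m)) (lam θ : ℝ)

lemma continuous_pd0 (i : Fin n) : Continuous (pd0 A b lam θ i) := by
  unfold pd0
  apply Continuous.add
  · exact Continuous.inner ((A.continuous_of_finiteDimensional).sub continuous_const)
      continuous_const
  · exact continuous_mqd.comp (EuclideanSpace.proj i).continuous

/-- Structure of the limiting subdifferential of `ff`. -/
lemma limSubdiff_struct (hlam : 0 < lam) (hθ : 0 < θ) {x v : EuclideanSpace ℝ (Fin n)}
    (hv : v ∈ limSubdiff (fun y => ((ff A b lam θ y : ℝ) : EReal)) x) (i : Fin n) :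
    (x i ≠ 0 → v i = pd0 A b lam θ i x + lam * Real.sign (x i)) ∧
    (x i = 0 → |v i - pd0 A b lam θ i x| ≤ lam) := by
  obtain ⟨-, xs, vs, hxs, -, hvs, hreg⟩ := hv
  have hA := fun t => regSubdiff_struct A b lam θ hlam hθ (hreg t) i
  have hxi : Filter.Tendsto (fun t => xs t i) atTop (𝓝 (x i)) :=
    ((EuclideanSpace.proj i).continuous.tendsto x).comp hxs
  have hvi : Filter.Tendsto (fun t => vs t i) atTop (𝓝 (v i)) :=
    ((EuclideanSpace.proj i).continuous.tendsto v).comp hvs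
  have hpd : Filter.Tendsto (fun t => pd0 A b lam θ i (xs t)) atTop (𝓝 (pd0 A b lam θ i x)) :=
    (((continuous_pd0 A b lam θ i)).tendsto x).comp hxs
  constructor
  · intro hne
    rcases hne.lt_or_gt with h | h
    · -- x i < 0
      have hev : ∀ᶠ t in atTop, xs t i < 0 := hxi.eventually (eventually_lt_nhds h)
      have heq : (fun t => vs t i) =ᶠ[atTop]
          (fun t => pd0 A b lam θ i (xs t) + lam * (-1)) := by
        filter_upwards [hev] with t ht
        rw [(hA t).1 (ne_of_lt ht), Real.sign_of_neg ht]
      have h2 : Filter.Tendsto (fun t => pd0 A b lam θ i (xs t) + lam * (-1)) atTop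
          (𝓝 (pd0 A b lam θ i x + lam * (-1))) := hpd.add_const _
      have := tendsto_nhds_unique hvi (h2.congr' heq.symm)
      rw [this, Real.sign_of_neg h]
    · have hev : ∀ᶠ t in atTop, 0 < xs t i := hxi.eventually (eventually_gt_nhds h)
      have heq : (fun t => vs t i) =ᶠ[atTop]
          (fun t => pd0 A b lam θ i (xs t) + lam * 1) := by
        filter_upwards [hev] with t ht
        rw [(hA t).1 (ne_of_gt ht), Real.sign_of_pos ht]
      have h2 : Filter.Tendsto (fun t => pd0 A b lam θ i (xs t) + lam * 1) atTop
          (𝓝 (pd0 A b lam θ i x + lam * 1)) := hpd.add_const _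
      have := tendsto_nhds_unique hvi (h2.congr' heq.symm)
      rw [this, Real.sign_of_pos h]
  · intro _
    have hbd : ∀ t, |vs t i - pd0 A b lam θ i (xs t)| ≤ lam := by
      intro t
      rcases eq_or_ne (xs t i) 0 with h0 | h0
      · exact (hA t).2 h0
      · rw [(hA t).1 h0]
        have : |lam * Real.sign (xs t i)| = lam := by
          rcases h0.lt_or_gt with h | h
          · rw [Real.sign_of_neg h]
            simp [abs_of_pos hlam]
          · rw [Real.sign_of_pos h]
            simp [abs_of_pos hlam]
        calc |pd0 A b lam θ i (xs t) + lam * Real.sign (xs t i) - pd0 A b lam θ i (xs t)|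
            = |lam * Real.sign (xs t i)| := by ring_nf
          _ ≤ lam := this.le
    have htend : Filter.Tendsto (fun t => |vs t i - pd0 A b lam θ i (xs t)|) atTop
        (𝓝 (|v i - pd0 A b lam θ i x|)) := (hvi.sub hpd).abs
    exact le_of_tendsto htend (Filter.Eventually.of_forall hbd)

end S16

namespace S16

/-- region pattern codes for one coordinate -/
inductive Pat where | z | pi | po | ni | no deriving DecidableEq

instance : Fintype Pat :=
  ⟨⟨{.z, .pi, .po, .ni, .no}, by decide⟩, by intro x; cases x <;> decide⟩

variable (lam θ : ℝ)

/-- the quadratic piece on each region -/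
def psi : Pat → ℝ → ℝ
  | .z => fun _ => 0
  | .pi => fun t => lam*t - t^2/(2*θ)
  | .po => fun _ => θ*lam^2/2
  | .ni => fun t => -(lam*t) - t^2/(2*θ)
  | .no => fun _ => θ*lam^2/2

/-- derivative of the quadratic piece -/
def psid : Pat → ℝ → ℝ
  | .z => fun _ => 0
  | .pi => fun t => lam - t/θ
  | .po => fun _ => 0
  | .ni => fun t => -lam - t/θ
  | .no => fun _ => 0

/-- 1/θ-coefficient of the quadratic piece -/
def inm : Pat → ℝ
  | .pi => 1
  | .ni => 1
  | _ => 0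

/-- the (closed) region of each pattern code -/
def Rcond : Pat → ℝ → Prop
  | .z => fun t => t = 0
  | .pi => fun t => 0 ≤ t ∧ t ≤ θ*lam
  | .po => fun t => θ*lam ≤ t
  | .ni => fun t => -(θ*lam) ≤ t ∧ t ≤ 0
  | .no => fun t => t ≤ -(θ*lam)

open Classical in
/-- canonical pattern code of a real number -/
def pcode (t : ℝ) : Pat :=
  if t = 0 then .z
  else if 0 < t then (if t ≤ θ*lam then .pi else .po)
  else (if -(θ*lam) ≤ t then .ni else .no)

variable {lam θ : ℝ}

lemma pcode_z_iff (t : ℝ) : pcode lam θ t = .z ↔ t = 0 := by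
  unfold pcode
  split_ifs with h1 h2 h3 h3 <;> simp_all

lemma rcond_pcode (t : ℝ) : Rcond lam θ (pcode lam θ t) t := by
  unfold pcode
  split_ifs with h1 h2 h3 h3 <;> unfold Rcond
  · exact h1
  · exact ⟨h2.le, h3⟩
  · push_neg at h3; exact h3.le
  · push_neg at h2; exact ⟨h3, h2⟩
  · push_neg at h2 h3; exact h3.le

/-- On its region, `mcp` coincides with the quadratic piece. -/
lemma mcp_eq_psi (hlam : 0 < lam) (hθ : 0 < θ) {k : Pat} {t : ℝ} (h : Rcond lam θ k t) :
    mcp lam θ t = psi lam θ k t := by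
  have htl : 0 < θ * lam := mul_pos hθ hlam
  cases k <;> unfold Rcond at h <;> unfold mcp psi
  · -- z
    subst h
    rw [if_pos (by simp [htl.le])]
    simp
  · -- pi
    rw [if_pos (by rw [abs_of_nonneg h.1]; exact h.2), abs_of_nonneg h.1]
  · -- po
    split_ifs with h2
    · have ht : t = θ*lam := le_antisymm (le_of_abs_le h2) h
      subst ht
      rw [abs_of_pos htl]
      field_simp
      ring
    · rfl
  · -- ni
    rw [if_pos (by rw [abs_of_nonpos h.2]; linarith [h.1]), abs_of_nonpos h.2]
    ring
  · -- no
    split_ifs with h2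
    · have ht : t = -(θ*lam) := le_antisymm h (neg_le_of_abs_le h2)
      subst ht
      rw [abs_of_neg (by linarith)]
      field_simp
      ring
    · rfl

/-- gradient match at non-kink points -/
lemma grad_match (hlam : 0 < lam) (hθ : 0 < θ) {t : ℝ} (ht : t ≠ 0) :
    mqd lam θ t + lam * Real.sign t = psid lam θ (pcode lam θ t) t := by
  have htl : 0 < θ * lam := mul_pos hθ hlam
  unfold pcode
  rw [if_neg ht]
  rcases ht.lt_or_gt with h | h
  · rw [if_neg (by linarith), Real.sign_of_neg h]
    split_ifs with h3
    · unfold psid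
      rw [mqd_of_abs_le (by rw [abs_of_neg h]; linarith)]
      ring
    · push_neg at h3
      simp only [psid]
      rw [mqd_of_le (by linarith) htl.le]
      have hd : θ*lam/θ = lam := mul_div_cancel_left₀ lam (ne_of_gt hθ)
      linarith
  · rw [if_pos h, Real.sign_of_pos h]
    split_ifs with h3
    · unfold psid
      rw [mqd_of_abs_le (by rw [abs_of_pos h]; exact h3)]
      ring
    · push_neg at h3
      simp only [psid]
      rw [mqd_of_ge (by linarith) htl.le]
      have hd : θ*lam/θ = lam := mul_div_cancel_left₀ lam (ne_of_gt hθ)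
      have hd' : -(θ*lam)/θ = -lam := by rw [neg_div, hd]
      linarith

/-- exact first-order Taylor for the pieces -/
lemma psi_taylor (k : Pat) (a y : ℝ) :
    psi lam θ k (a + y) = psi lam θ k a + psid lam θ k a * y - inm k * y^2/(2*θ) := by
  cases k <;> unfold psi psid inm <;> ring

/-- derivative expansion for the pieces -/
lemma psid_expand (k : Pat) (a y : ℝ) :
    psid lam θ k (a + y) = psid lam θ k a - inm k * y/θ := by
  cases k <;> unfold psid inm <;> ring

/-- region stability: nearby points have compatible patterns -/
lemma region_stab (hlam : 0 < lam) (hθ : 0 < θ) (a : ℝ) :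
    ∃ δ : ℝ, 0 < δ ∧ ∀ b : ℝ, |b - a| ≤ δ → Rcond lam θ (pcode lam θ b) a := by
  have htl : 0 < θ * lam := mul_pos hθ hlam
  have key : ∀ b : ℝ, b = 0 ∨ (0 < b ∧ b ≤ θ*lam) ∨ (θ*lam < b) ∨ (-(θ*lam) ≤ b ∧ b < 0)
      ∨ (b < -(θ*lam)) := by
    intro b
    rcases lt_trichotomy b 0 with h | h | h
    · rcases le_or_gt (-(θ*lam)) b with h2 | h2
      · exact Or.inr (Or.inr (Or.inr (Or.inl ⟨h2, h⟩)))
      · exact Or.inr (Or.inr (Or.inr (Or.inr h2)))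
    · exact Or.inl h
    · rcases le_or_gt b (θ*lam) with h2 | h2
      · exact Or.inr (Or.inl ⟨h, h2⟩)
      · exact Or.inr (Or.inr (Or.inl h2))
  have pz : ∀ b : ℝ, b = 0 → pcode lam θ b = .z := fun b h => (pcode_z_iff b).mpr h
  have ppi : ∀ b : ℝ, 0 < b → b ≤ θ*lam → pcode lam θ b = .pi := by
    intro b h1 h2; unfold pcode
    rw [if_neg (ne_of_gt h1), if_pos h1, if_pos h2]
  have ppo : ∀ b : ℝ, θ*lam < b → pcode lam θ b = .po := by
    intro b h1; unfold pcode
    have hb0 : ¬ b = 0 := by intro hh; rw [hh] at h1; linarith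
    rw [if_neg hb0, if_pos (by linarith), if_neg (not_le.mpr h1)]
  have pni : ∀ b : ℝ, -(θ*lam) ≤ b → b < 0 → pcode lam θ b = .ni := by
    intro b h1 h2; unfold pcode
    rw [if_neg (ne_of_lt h2), if_neg (by linarith), if_pos h1]
  have pno : ∀ b : ℝ, b < -(θ*lam) → pcode lam θ b = .no := by
    intro b h1; unfold pcode
    rw [if_neg (by linarith), if_neg (by linarith), if_neg (not_le.mpr h1)]
  rcases key a with h | h | h | h | h
  · -- a = 0
    refine ⟨θ*lam/2, by positivity, fun b hb => ?_⟩
    subst h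
    rw [sub_zero] at hb
    have hb' := abs_le.mp hb
    rcases key b with h2 | h2 | h2 | h2 | h2
    · rw [pz b h2]; unfold Rcond; rfl
    · rw [ppi b h2.1 h2.2]; exact ⟨le_refl 0, by linarith⟩
    · exfalso; linarith [hb'.2]
    · rw [pni b h2.1 h2.2]; exact ⟨by linarith, le_refl 0⟩
    · exfalso; linarith [hb'.1]
  · -- 0 < a ≤ θλ
    rcases eq_or_lt_of_le h.2 with heq | hlt
    · -- a = θλ
      refine ⟨a/2, by linarith [h.1], fun b hb => ?_⟩
      have hb' := abs_le.mp hb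
      have hbpos : 0 < b := by linarith [hb'.1, h.1]
      rcases le_or_gt b (θ*lam) with h2 | h2
      · rw [ppi b hbpos h2]; exact ⟨h.1.le, h.2⟩
      · rw [ppo b h2]; exact le_of_eq heq.symm
    · refine ⟨min (a/2) ((θ*lam - a)/2), lt_min_iff.mpr ⟨by linarith [h.1], by linarith⟩,
        fun b hb => ?_⟩
      have hb' := abs_le.mp hb
      have hm1 : min (a/2) ((θ*lam - a)/2) ≤ a/2 := min_le_left _ _
      have hm2 : min (a/2) ((θ*lam - a)/2) ≤ (θ*lam - a)/2 := min_le_right _ _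
      have hbpos : 0 < b := by linarith [hb'.1, h.1]
      have hble : b ≤ θ*lam := by linarith [hb'.2]
      rw [ppi b hbpos hble]; exact ⟨h.1.le, h.2⟩
  · -- θλ < a
    refine ⟨(a - θ*lam)/2, by linarith, fun b hb => ?_⟩
    have hb' := abs_le.mp hb
    have : θ*lam < b := by linarith [hb'.1]
    rw [ppo b this]
    exact le_of_lt h
  · -- -θλ ≤ a < 0
    rcases eq_or_lt_of_le h.1 with heq | hlt
    · refine ⟨-a/2, by linarith [h.2], fun b hb => ?_⟩
      have hb' := abs_le.mp hb
      have hbneg : b < 0 := by linarith [hb'.2, h.2]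
      rcases le_or_gt (-(θ*lam)) b with h2 | h2
      · rw [pni b h2 hbneg]; exact ⟨h.1, h.2.le⟩
      · rw [pno b h2]; exact le_of_eq heq.symm
    · refine ⟨min (-a/2) ((a - -(θ*lam))/2), lt_min_iff.mpr ⟨by linarith [h.2], by linarith⟩,
        fun b hb => ?_⟩
      have hb' := abs_le.mp hb
      have hm1 : min (-a/2) ((a - -(θ*lam))/2) ≤ -a/2 := min_le_left _ _
      have hm2 : min (-a/2) ((a - -(θ*lam))/2) ≤ (a - -(θ*lam))/2 := min_le_right _ _
      have hbneg : b < 0 := by linarith [hb'.2, h.2]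
      have hbge : -(θ*lam) ≤ b := by linarith [hb'.1]
      rw [pni b hbge hbneg]; exact ⟨h.1, h.2.le⟩
  · refine ⟨(-(θ*lam) - a)/2, by linarith, fun b hb => ?_⟩
    have hb' := abs_le.mp hb
    have : b < -(θ*lam) := by linarith [hb'.2]
    rw [pno b this]
    exact (by linarith : a ≤ -(θ*lam))

end S16

namespace S16

variable {m n : ℕ}

lemma euclid_inner (x y : EuclideanSpace ℝ (Fin n)) : ⟪x, y⟫ = ∑ i, x i * y i := by
  rw [PiLp.inner_apply]
  simp [RCLike.inner_apply, mul_comm]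

lemma coord_eq_inner (u : EuclideanSpace ℝ (Fin n)) (i : Fin n) :
    u i = ⟪u, EuclideanSpace.single i (1:ℝ)⟫ := by
  rw [EuclideanSpace.inner_single_right]; simp

/-- diagonal linear map -/
def dmask (w : Fin n → ℝ) : EuclideanSpace ℝ (Fin n) →ₗ[ℝ] EuclideanSpace ℝ (Fin n) where
  toFun x := (WithLp.equiv 2 (Fin n → ℝ)).symm (fun i => w i * x i)
  map_add' x y := by
    apply PiLp.ext
    intro i
    simp only [WithLp.equiv_symm_apply]
    show w i * (x i + y i) = w i * x i + w i * y i
    ring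
  map_smul' c x := by
    apply PiLp.ext
    intro i
    simp only [WithLp.equiv_symm_apply, RingHom.id_apply]
    show w i * (c * x i) = c * (w i * x i)
    ring

lemma dmask_apply (w : Fin n → ℝ) (x : EuclideanSpace ℝ (Fin n)) (i : Fin n) :
    dmask w x i = w i * x i := rfl

lemma inner_dmask (w : Fin n → ℝ) (x y : EuclideanSpace ℝ (Fin n)) :
    ⟪dmask w x, y⟫ = ∑ i, w i * x i * y i := by
  rw [euclid_inner]
  exact Finset.sum_congr rfl fun i _ => by rw [dmask_apply]

lemma dmask_symm (w : Fin n → ℝ) (x y : EuclideanSpace ℝ (Fin n)) :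
    ⟪dmask w x, y⟫ = ⟪x, dmask w y⟫ := by
  rw [inner_dmask, real_inner_comm, inner_dmask]
  exact Finset.sum_congr rfl fun i _ => by ring

variable (A : EuclideanSpace ℝ (Fin n) →ₗ[ℝ] EuclideanSpace ℝ (Fin m))
  (b : EuclideanSpace ℝ (Fin m)) (lam θ : ℝ)

/-- 0/1 mask vector of a pattern -/
def Pvec (p : Fin n → Pat) : Fin n → ℝ := fun i => if p i = Pat.z then 0 else 1

/-- projection onto the non-zero coordinates of a pattern -/
def Pmask (p : Fin n → Pat) : EuclideanSpace ℝ (Fin n) →ₗ[ℝ] EuclideanSpace ℝ (Fin n) :=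
  dmask (Pvec p)

/-- Hessian operator of the pattern quadratic -/
def Hop (p : Fin n → Pat) : EuclideanSpace ℝ (Fin n) →ₗ[ℝ] EuclideanSpace ℝ (Fin n) :=
  ((LinearMap.adjoint A) ∘ₗ A) - dmask (fun i => inm (p i) / θ)

/-- compressed Hessian -/
def Ttil (p : Fin n → Pat) : EuclideanSpace ℝ (Fin n) →ₗ[ℝ] EuclideanSpace ℝ (Fin n) :=
  Pmask p ∘ₗ Hop A θ p ∘ₗ Pmask p

/-- the pattern quadratic -/
def Qp (p : Fin n → Pat) (x : EuclideanSpace ℝ (Fin n)) : ℝ :=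
  1/2 * ‖A x - b‖^2 + ∑ i, psi lam θ (p i) (x i)

/-- gradient of the pattern quadratic -/
def gradQp (p : Fin n → Pat) (x : EuclideanSpace ℝ (Fin n)) : EuclideanSpace ℝ (Fin n) :=
  LinearMap.adjoint A (A x - b) +
    (WithLp.equiv 2 (Fin n → ℝ)).symm (fun i => psid lam θ (p i) (x i))

lemma gradQp_apply (p : Fin n → Pat) (x : EuclideanSpace ℝ (Fin n)) (i : Fin n) :
    gradQp A b lam θ p x i
      = ⟪A x - b, A (EuclideanSpace.single i (1:ℝ))⟫ + psid lam θ (p i) (x i) := by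
  show (LinearMap.adjoint A (A x - b)) i
      + ((WithLp.equiv 2 (Fin n → ℝ)).symm (fun i => psid lam θ (p i) (x i))) i = _
  rw [coord_eq_inner (LinearMap.adjoint A (A x - b)) i, LinearMap.adjoint_inner_left]
  rfl

lemma Hop_apply (p : Fin n → Pat) (y : EuclideanSpace ℝ (Fin n)) (i : Fin n) :
    Hop A θ p y i = ⟪A y, A (EuclideanSpace.single i (1:ℝ))⟫ - inm (p i)/θ * y i := by
  show ((LinearMap.adjoint A) (A y)) i - (dmask (fun i => inm (p i) / θ)) y i = _
  rw [coord_eq_inner (LinearMap.adjoint A (A y)) i, LinearMap.adjoint_inner_left, dmask_apply]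

/-- gradient expansion -/
lemma gradQp_expand (p : Fin n → Pat) (x z : EuclideanSpace ℝ (Fin n)) :
    gradQp A b lam θ p x = gradQp A b lam θ p z + Hop A θ p (x - z) := by
  apply PiLp.ext
  intro i
  show gradQp A b lam θ p x i = gradQp A b lam θ p z i + Hop A θ p (x - z) i
  rw [gradQp_apply, gradQp_apply, Hop_apply]
  have hx : x i = z i + (x - z) i := by
    show x i = z i + (x i - z i); ring
  rw [hx, psid_expand]
  have hA : A x - b = (A z - b) + A (x - z) := by
    rw [map_sub]; abel
  rw [hA, inner_add_left]
  ring

/-- exact second order Taylor expansion of the pattern quadratic -/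
lemma Qp_taylor (p : Fin n → Pat) (x z : EuclideanSpace ℝ (Fin n)) :
    Qp A b lam θ p x - Qp A b lam θ p z
      = ⟪gradQp A b lam θ p z, x - z⟫ + 1/2 * ⟪Hop A θ p (x - z), x - z⟫ := by
  have hA : A x - b = (A z - b) + A (x - z) := by rw [map_sub]; abel
  have h1 : ‖A x - b‖^2 = ‖A z - b‖^2 + 2*⟪A z - b, A (x-z)⟫ + ‖A (x-z)‖^2 := by
    rw [hA, norm_add_sq_real]
  have hxz : ∀ i : Fin n, x i = z i + (x - z) i := fun i => by
    show _ = z i + (x i - z i); ring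
  have hpt : ∀ i, psi lam θ (p i) (x i) = psi lam θ (p i) (z i)
      + (psid lam θ (p i) (z i) * (x-z) i - inm (p i) * ((x-z) i)^2/(2*θ)) := fun i => by
    rw [hxz i, psi_taylor]; ring
  have h2 : ∑ i, psi lam θ (p i) (x i) = ∑ i, psi lam θ (p i) (z i)
      + (∑ i, psid lam θ (p i) (z i) * (x-z) i
         - ∑ i, inm (p i) * ((x-z) i)^2/(2*θ)) := by
    rw [Finset.sum_congr rfl (fun i _ => hpt i), Finset.sum_add_distrib,
      Finset.sum_sub_distrib]
  have h3 : ⟪gradQp A b lam θ p z, x - z⟫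
      = ⟪A z - b, A (x-z)⟫ + ∑ i, psid lam θ (p i) (z i) * (x-z) i := by
    unfold gradQp
    rw [inner_add_left, LinearMap.adjoint_inner_left]
    congr 1
    rw [euclid_inner]; rfl
  have h4 : ⟪Hop A θ p (x-z), x-z⟫
      = ‖A (x-z)‖^2 - ∑ i, inm (p i)/θ * ((x-z) i)^2 := by
    unfold Hop
    rw [LinearMap.sub_apply, inner_sub_left, LinearMap.comp_apply,
      LinearMap.adjoint_inner_left, real_inner_self_eq_norm_sq, inner_dmask]
    congr 1
    exact Finset.sum_congr rfl fun i _ => by ring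
  have h5 : ∑ i, inm (p i) * ((x-z) i)^2/(2*θ)
      = (∑ i, inm (p i)/θ * ((x-z) i)^2)/2 := by
    rw [Finset.sum_div]
    exact Finset.sum_congr rfl fun i _ => by ring
  unfold Qp
  rw [h1, h2, h3, h4, h5]
  ring

/-- on its region the objective equals the pattern quadratic -/
lemma ff_eq_Qp (hlam : 0 < lam) (hθ : 0 < θ) (p : Fin n → Pat)
    (x : EuclideanSpace ℝ (Fin n)) (hx : ∀ i, Rcond lam θ (p i) (x i)) :
    ff A b lam θ x = Qp A b lam θ p x := by
  unfold ff Qp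
  congr 1
  exact Finset.sum_congr rfl fun i _ => mcp_eq_psi hlam hθ (hx i)

lemma Pmask_norm_le (p : Fin n → Pat) (v : EuclideanSpace ℝ (Fin n)) :
    ‖Pmask p v‖ ≤ ‖v‖ := by
  rw [EuclideanSpace.norm_eq, EuclideanSpace.norm_eq]
  apply Real.sqrt_le_sqrt
  apply Finset.sum_le_sum
  intro i _
  show ‖(Pmask p v) i‖^2 ≤ ‖v i‖^2
  rw [Pmask, dmask_apply, Pvec]
  split_ifs
  · rw [zero_mul, norm_zero]
    simpa using sq_nonneg ‖v i‖
  · simp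

lemma Pmask_fix (p : Fin n → Pat) (y : EuclideanSpace ℝ (Fin n))
    (hy : ∀ i, p i = Pat.z → y i = 0) : Pmask p y = y := by
  apply PiLp.ext
  intro i
  show (Pvec p) i * y i = y i
  rw [Pvec]
  split_ifs with h
  · rw [hy i h]; ring
  · ring

lemma Hop_symm (p : Fin n → Pat) (x y : EuclideanSpace ℝ (Fin n)) :
    ⟪Hop A θ p x, y⟫ = ⟪x, Hop A θ p y⟫ := by
  unfold Hop
  rw [LinearMap.sub_apply, LinearMap.sub_apply, inner_sub_left, inner_sub_right]
  congr 1
  · rw [LinearMap.comp_apply, LinearMap.comp_apply, LinearMap.adjoint_inner_left,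
      LinearMap.adjoint_inner_right]
  · exact dmask_symm _ x y
 
lemma Ttil_symm (p : Fin n → Pat) (x y : EuclideanSpace ℝ (Fin n)) :
    ⟪Ttil A θ p x, y⟫ = ⟪x, Ttil A θ p y⟫ := by
  unfold Ttil
  simp only [LinearMap.comp_apply]
  rw [Pmask, dmask_symm, Hop_symm, dmask_symm]

end S16

namespace S16

variable {n : ℕ}

/-- quadratic lower bound for symmetric operators: `μ ⟪Ty,y⟫ ≤ ‖Ty‖²` -/
lemma klq (T : EuclideanSpace ℝ (Fin n) →ₗ[ℝ] EuclideanSpace ℝ (Fin n))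
    (hsym : ∀ x y, ⟪T x, y⟫ = ⟪x, T y⟫) :
    ∃ μ : ℝ, 0 < μ ∧ ∀ y, μ * ⟪T y, y⟫ ≤ ‖T y‖^2 := by
  by_cases hT : T = 0
  · refine ⟨1, one_pos, fun y => ?_⟩
    subst hT
    simp
  · set K := LinearMap.ker T with hK
    have hW : Kᗮ ≠ ⊥ := by
      intro hbot
      rw [Submodule.orthogonal_eq_bot_iff] at hbot
      apply hT
      apply LinearMap.ext
      intro y
      have hy : y ∈ K := hbot ▸ Submodule.mem_top
      simpa using LinearMap.mem_ker.mp hy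
    obtain ⟨w, hwW, hw0⟩ := Submodule.ne_bot_iff _ |>.mp hW
    set S : Set (EuclideanSpace ℝ (Fin n)) := (Kᗮ : Set _) ∩ Metric.sphere 0 1 with hS
    have hSclosed : IsClosed S :=
      (Submodule.closed_of_finiteDimensional _).inter Metric.isClosed_sphere
    have hSbdd : Bornology.IsBounded S :=
      (Metric.isBounded_sphere).subset Set.inter_subset_right
    have hScompact : IsCompact S := Metric.isCompact_of_isClosed_isBounded hSclosed hSbdd
    have hSne : S.Nonempty := by
      refine ⟨‖w‖⁻¹ • w, Submodule.smul_mem _ _ hwW, ?_⟩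
      simp only [Metric.mem_sphere, dist_zero_right, norm_smul, norm_inv, norm_norm]
      rw [inv_mul_cancel₀ (norm_ne_zero_iff.mpr hw0)]
    have hcont : ContinuousOn (fun u => ‖T u‖) S :=
      (continuous_norm.comp T.continuous_of_finiteDimensional).continuousOn
    obtain ⟨w0, hw0S, hmin⟩ := hScompact.exists_isMinOn hSne hcont
    set c : ℝ := ‖T w0‖ with hc
    have hw0W : w0 ∈ Kᗮ := hw0S.1
    have hw0n : ‖w0‖ = 1 := by
      have := hw0S.2
      simpa using this
    have hcpos : 0 < c := by
      rcases (norm_nonneg (T w0)).lt_or_eq with h | h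
      · exact h
      · exfalso
        have hker : w0 ∈ K := by
          rw [hK, LinearMap.mem_ker]
          exact norm_eq_zero.mp h.symm
        have : w0 = 0 := by
          have hd := Submodule.orthogonal_disjoint K
          exact (Submodule.disjoint_def.mp hd) w0 hker hw0W
        rw [this] at hw0n
        simp at hw0n
    have antilip : ∀ u ∈ Kᗮ, c * ‖u‖ ≤ ‖T u‖ := by
      intro u huW
      rcases eq_or_ne u 0 with rfl | hu0
      · simp
      · have humem : ‖u‖⁻¹ • u ∈ S := by
          refine ⟨Submodule.smul_mem _ _ huW, ?_⟩
          simp only [Metric.mem_sphere, dist_zero_right, norm_smul, norm_inv, norm_norm]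
          rw [inv_mul_cancel₀ (norm_ne_zero_iff.mpr hu0)]
        have := hmin humem
        simp only [Set.mem_setOf_eq] at this
        have h2 : c ≤ ‖T (‖u‖⁻¹ • u)‖ := this
        rw [map_smul, norm_smul, norm_inv, norm_norm] at h2
        have hun : 0 < ‖u‖ := norm_pos_iff.mpr hu0
        calc c * ‖u‖ ≤ (‖u‖⁻¹ * ‖T u‖) * ‖u‖ := by
              apply mul_le_mul_of_nonneg_right h2 hun.le
          _ = ‖T u‖ := by field_simp
    refine ⟨c, hcpos, fun y => ?_⟩
    obtain ⟨a, ha, u, hu, hdecomp⟩ := Submodule.exists_add_mem_mem_orthogonal (K := K) y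
    have hTa : T a = 0 := by
      rw [hK] at ha
      exact LinearMap.mem_ker.mp ha
    have hTy : T y = T u := by
      rw [hdecomp, map_add, hTa, zero_add]
    have hip : ⟪T y, y⟫ = ⟪T u, u⟫ := by
      rw [hTy, hdecomp, inner_add_right]
      have : ⟪T u, a⟫ = 0 := by
        rw [hsym u a, hTa, inner_zero_right]
      rw [this, zero_add]
    have hub : ‖u‖ ≤ ‖T u‖ / c := by
      rw [le_div_iff₀ hcpos]
      calc ‖u‖ * c = c * ‖u‖ := by ring
        _ ≤ ‖T u‖ := antilip u hu
    calc c * ⟪T y, y⟫ = c * ⟪T u, u⟫ := by rw [hip]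
      _ ≤ c * (‖T u‖ * ‖u‖) := by
          apply mul_le_mul_of_nonneg_left (real_inner_le_norm _ _) hcpos.le
      _ ≤ c * (‖T u‖ * (‖T u‖ / c)) := by
          apply mul_le_mul_of_nonneg_left
            (mul_le_mul_of_nonneg_left hub (norm_nonneg _)) hcpos.le
      _ = ‖T u‖^2 := by field_simp
      _ = ‖T y‖^2 := by rw [hTy]

end S16

namespace S16

variable {m n : ℕ}

lemma abs_coord_le_norm (u : EuclideanSpace ℝ (Fin n)) (i : Fin n) : |u i| ≤ ‖u‖ := by
  rw [coord_eq_inner u i]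
  calc |⟪u, EuclideanSpace.single i (1:ℝ)⟫| ≤ ‖u‖ * ‖EuclideanSpace.single i (1:ℝ)‖ :=
        abs_real_inner_le_norm _ _
    _ = ‖u‖ := by rw [EuclideanSpace.norm_single]; simp

variable (A : EuclideanSpace ℝ (Fin n) →ₗ[ℝ] EuclideanSpace ℝ (Fin m))
  (b : EuclideanSpace ℝ (Fin m)) (lam θ : ℝ)

lemma main_kl (hlam : 0 < lam) (hθ : 0 < θ) :
    IsKL (fun x => ((ff A b lam θ x : ℝ) : EReal)) (1/2) := by
  classical
  intro xbar _
  -- region stability radius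
  obtain ⟨ε₀, hε₀pos, hε₀⟩ : ∃ ε₀ : ℝ, 0 < ε₀ ∧ ∀ x : EuclideanSpace ℝ (Fin n),
      ‖x - xbar‖ ≤ ε₀ → ∀ i, Rcond lam θ (pcode lam θ (x i)) (xbar i) := by
    choose δ hδpos hδ using fun i : Fin n => region_stab hlam hθ (xbar i)
    have hev : ∀ᶠ ε in 𝓝[>] (0:ℝ), ∀ i : Fin n, ε ≤ δ i := by
      rw [eventually_all]
      intro i
      have hmem : Set.Ioc (0:ℝ) (δ i) ∈ 𝓝[>] (0:ℝ) :=
        Ioc_mem_nhdsGT_of_mem ⟨le_refl 0, hδpos i⟩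
      filter_upwards [hmem] with ε hε
      exact hε.2
    obtain ⟨ε₀, hle, hpos⟩ := (hev.and self_mem_nhdsWithin).exists
    refine ⟨ε₀, hpos, fun x hx i => ?_⟩
    apply hδ i
    calc |x i - xbar i| ≤ ‖x - xbar‖ := by
          have := abs_coord_le_norm (x - xbar) i
          simpa using this
      _ ≤ ε₀ := hx
      _ ≤ δ i := hle i
  -- per-pattern constants
  choose μ hμpos hμ using fun p : Fin n → Pat => klq (Ttil A θ p) (Ttil_symm A θ p)
  set gtil : (Fin n → Pat) → EuclideanSpace ℝ (Fin n) :=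
    fun p => Pmask p (gradQp A b lam θ p xbar) with hgtil
  set Chp : (Fin n → Pat) → ℝ :=
    fun p => ‖LinearMap.toContinuousLinearMap (Ttil A θ p)‖ with hChp
  set cp : (Fin n → Pat) → ℝ :=
    fun p => if gtil p = 0 then min 1 (Real.sqrt (2 * μ p)) else 1 with hcp
  set εp : (Fin n → Pat) → ℝ :=
    fun p => if gtil p = 0 then 1 else ‖gtil p‖/(2*(Chp p + 1)) with hεp
  set νp : (Fin n → Pat) → ℝ :=
    fun p => if gtil p = 0 then 1 else (‖gtil p‖/2)^2 with hνp
  have hcp_pos : ∀ p, 0 < cp p := by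
    intro p
    rw [hcp]
    dsimp only
    split_ifs with h
    · exact lt_min one_pos (Real.sqrt_pos.mpr (by linarith [hμpos p]))
    · exact one_pos
  have hChp_nonneg : ∀ p, 0 ≤ Chp p := fun p => norm_nonneg _
  have hεp_pos : ∀ p, 0 < εp p := by
    intro p
    rw [hεp]
    dsimp only
    split_ifs with h
    · exact one_pos
    · apply div_pos (norm_pos_iff.mpr h)
      have := hChp_nonneg p
      linarith
  have hνp_pos : ∀ p, 0 < νp p := by
    intro p
    rw [hνp]
    dsimp only
    split_ifs with h
    · exact one_pos
    · have : ‖gtil p‖ > 0 := norm_pos_iff.mpr h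
      positivity
  have huniv : (Finset.univ : Finset (Fin n → Pat)).Nonempty :=
    ⟨fun _ => Pat.z, Finset.mem_univ _⟩
  set c : ℝ := Finset.univ.inf' huniv cp with hcdef
  set εg : ℝ := min ε₀ (Finset.univ.inf' huniv εp) with hεgdef
  set νg : ℝ := Finset.univ.inf' huniv νp with hνgdef
  have hcpos : 0 < c := by
    rw [hcdef, Finset.lt_inf'_iff]
    exact fun p _ => hcp_pos p
  have hεgpos : 0 < εg := by
    rw [hεgdef]
    apply lt_min hε₀pos
    rw [Finset.lt_inf'_iff]
    exact fun p _ => hεp_pos p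
  have hνgpos : 0 < νg := by
    rw [hνgdef, Finset.lt_inf'_iff]
    exact fun p _ => hνp_pos p
  refine ⟨c, hcpos, εg, hεgpos, (νg : EReal), by exact_mod_cast hνgpos, ?_⟩
  intro x hxnear hlow hhigh
  -- translate EReal hypotheses to ℝ
  have hlow' : ff A b lam θ xbar < ff A b lam θ x := by
    have h2 : ((ff A b lam θ xbar : ℝ) : EReal) < ((ff A b lam θ x : ℝ) : EReal) := hlow
    exact_mod_cast h2
  have hhigh' : ff A b lam θ x < ff A b lam θ xbar + νg := by
    have h2 : ((ff A b lam θ x : ℝ) : EReal)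
        < ((ff A b lam θ xbar : ℝ) : EReal) + ((νg : ℝ) : EReal) := hhigh
    rw [← EReal.coe_add] at h2
    exact_mod_cast h2
  -- the pattern of x
  set p : Fin n → Pat := fun i => pcode lam θ (x i) with hp
  have hxreg : ∀ i, Rcond lam θ (p i) (x i) := fun i => rcond_pcode (x i)
  have hxbarreg : ∀ i, Rcond lam θ (p i) (xbar i) :=
    hε₀ x (le_trans hxnear (by rw [hεgdef]; exact min_le_left _ _))
  have hfx : ff A b lam θ x = Qp A b lam θ p x := ff_eq_Qp A b lam θ hlam hθ p x hxreg
  have hfxbar : ff A b lam θ xbar = Qp A b lam θ p xbar :=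
    ff_eq_Qp A b lam θ hlam hθ p xbar hxbarreg
  set y : EuclideanSpace ℝ (Fin n) := x - xbar with hy
  have hy0 : ∀ i, p i = Pat.z → y i = 0 := by
    intro i hz
    have hxi : x i = 0 := (pcode_z_iff (x i)).mp hz
    have hxbari : xbar i = 0 := by
      have := hxbarreg i
      rw [hz] at this
      exact this
    show x i - xbar i = 0
    rw [hxi, hxbari, sub_zero]
  have hPy : Pmask p y = y := Pmask_fix p y hy0
  -- value gap
  set Δ : ℝ := ff A b lam θ x - ff A b lam θ xbar with hΔ
  have hΔpos : 0 < Δ := by rw [hΔ]; linarith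
  have hΔlt : Δ < νg := by rw [hΔ]; linarith
  have hgp : ∀ q : Fin n → Pat, Pmask q (gradQp A b lam θ q xbar) = gtil q := by
    intro q
    rw [hgtil]
  have hPsymm : ∀ (q : Fin n → Pat) (u w : EuclideanSpace ℝ (Fin n)),
      ⟪Pmask q u, w⟫ = ⟪u, Pmask q w⟫ := fun q u w => dmask_symm _ u w
  have hTtil_eq : Pmask p (Hop A θ p y) = Ttil A θ p y := by
    have : Ttil A θ p y = Pmask p (Hop A θ p (Pmask p y)) := rfl
    rw [this, hPy]
  have hΔeq : Δ = ⟪gtil p, y⟫ + 1/2 * ⟪Ttil A θ p y, y⟫ := by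
    rw [hΔ, hfx, hfxbar, Qp_taylor A b lam θ p x xbar, ← hy]
    congr 1
    · calc ⟪gradQp A b lam θ p xbar, y⟫
          = ⟪gradQp A b lam θ p xbar, Pmask p y⟫ := by rw [hPy]
        _ = ⟪Pmask p (gradQp A b lam θ p xbar), y⟫ := (hPsymm p _ y).symm
        _ = ⟪gtil p, y⟫ := by rw [hgp p]
    · congr 1
      calc ⟪Hop A θ p y, y⟫
          = ⟪Hop A θ p (Pmask p y), Pmask p y⟫ := by rw [hPy]
        _ = ⟪Pmask p (Hop A θ p (Pmask p y)), y⟫ := (hPsymm p _ y).symm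
        _ = ⟪Ttil A θ p y, y⟫ := by rw [hPy, hTtil_eq]
  -- reduce the goal to a real inequality
  apply Metric.le_infEDist.mpr
  intro v hv
  have hvnorm : c * ((((ff A b lam θ x : ℝ) : EReal) - ((ff A b lam θ xbar : ℝ) : EReal)).toReal) ^ (1/2 : ℝ) ≤ ‖v‖ := by
    have htoReal : (((ff A b lam θ x : ℝ) : EReal) - ((ff A b lam θ xbar : ℝ) : EReal)).toReal = Δ := by
      rw [← EReal.coe_sub, EReal.toReal_coe, hΔ]
    rw [htoReal, ← Real.sqrt_eq_rpow]
    -- structure of v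
    have hstruct := limSubdiff_struct A b lam θ hlam hθ hv
    have hPv : Pmask p v = gtil p + Ttil A θ p y := by
      have h1 : Pmask p v = Pmask p (gradQp A b lam θ p x) := by
        apply PiLp.ext
        intro i
        show Pvec p i * v i = Pvec p i * (gradQp A b lam θ p x i)
        rw [Pvec]
        split_ifs with h
        · ring
        · have hxi : x i ≠ 0 := fun h0 => h ((pcode_z_iff (x i)).mpr h0)
          rw [one_mul, one_mul, (hstruct i).1 hxi, gradQp_apply]
          unfold pd0
          rw [← grad_match hlam hθ hxi]
          ring
      rw [h1, gradQp_expand A b lam θ p x xbar, map_add, ← hy, hTtil_eq, hgp p]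
    have hvge : ‖gtil p + Ttil A θ p y‖ ≤ ‖v‖ := by
      rw [← hPv]
      exact Pmask_norm_le p v
    by_cases hg : gtil p = 0
    · -- stationary case: spectral bound
      have hcle : c ≤ Real.sqrt (2 * μ p) := by
        calc c ≤ cp p := Finset.inf'_le _ (Finset.mem_univ p)
          _ ≤ Real.sqrt (2 * μ p) := by
              rw [hcp]; dsimp only; rw [if_pos hg]; exact min_le_right _ _
      have hΔeq2 : Δ = 1/2 * ⟪Ttil A θ p y, y⟫ := by
        rw [hΔeq, hg, inner_zero_left, zero_add]
      have hTyn : 2 * μ p * Δ ≤ ‖Ttil A θ p y‖^2 := by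
        have := hμ p y
        rw [hΔeq2]
        calc 2 * μ p * (1/2 * ⟪Ttil A θ p y, y⟫) = μ p * ⟪Ttil A θ p y, y⟫ := by ring
          _ ≤ ‖Ttil A θ p y‖^2 := this
      calc c * Real.sqrt Δ ≤ Real.sqrt (2 * μ p) * Real.sqrt Δ :=
            mul_le_mul_of_nonneg_right hcle (Real.sqrt_nonneg _)
        _ = Real.sqrt (2 * μ p * Δ) := by
            rw [← Real.sqrt_mul (by linarith [hμpos p] : (0:ℝ) ≤ 2 * μ p)]
        _ ≤ Real.sqrt (‖Ttil A θ p y‖^2) := Real.sqrt_le_sqrt hTyn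
        _ = ‖Ttil A θ p y‖ := Real.sqrt_sq (norm_nonneg _)
        _ = ‖gtil p + Ttil A θ p y‖ := by rw [hg, zero_add]
        _ ≤ ‖v‖ := hvge
    · -- non-stationary case
      have hgpos : 0 < ‖gtil p‖ := norm_pos_iff.mpr hg
      have hεple : εg ≤ ‖gtil p‖/(2*(Chp p + 1)) := by
        calc εg ≤ Finset.univ.inf' huniv εp := by rw [hεgdef]; exact min_le_right _ _
          _ ≤ εp p := Finset.inf'_le _ (Finset.mem_univ p)
          _ = ‖gtil p‖/(2*(Chp p + 1)) := by rw [hεp]; dsimp only; rw [if_neg hg]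
      have hyle : ‖y‖ ≤ ‖gtil p‖/(2*(Chp p + 1)) := by
        rw [hy]
        exact le_trans hxnear hεple
      have hTy_small : ‖Ttil A θ p y‖ ≤ ‖gtil p‖/2 := by
        have hop : ‖Ttil A θ p y‖ ≤ Chp p * ‖y‖ := by
          rw [hChp]
          dsimp only
          exact (LinearMap.toContinuousLinearMap (Ttil A θ p)).le_opNorm y
        have hch := hChp_nonneg p
        calc ‖Ttil A θ p y‖ ≤ Chp p * ‖y‖ := hop
          _ ≤ Chp p * (‖gtil p‖/(2*(Chp p + 1))) :=
              mul_le_mul_of_nonneg_left hyle hch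
          _ ≤ ‖gtil p‖/2 := by
              have hpos2 : (0:ℝ) < 2*(Chp p + 1) := by linarith
              have h4 : Chp p/(2*(Chp p+1)) ≤ 1/2 := by
                rw [div_le_div_iff₀ hpos2 two_pos]
                linarith
              calc Chp p * (‖gtil p‖/(2*(Chp p + 1)))
                  = ‖gtil p‖ * (Chp p/(2*(Chp p+1))) := by ring
                _ ≤ ‖gtil p‖ * (1/2) := mul_le_mul_of_nonneg_left h4 (norm_nonneg _)
                _ = ‖gtil p‖/2 := by ring
      have hlower : ‖gtil p‖/2 ≤ ‖gtil p + Ttil A θ p y‖ := by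
        have htri : ‖gtil p‖ ≤ ‖gtil p + Ttil A θ p y‖ + ‖Ttil A θ p y‖ := by
          have := norm_sub_le (gtil p + Ttil A θ p y) (Ttil A θ p y)
          simpa using this
        linarith
      have hνle : νg ≤ (‖gtil p‖/2)^2 := by
        calc νg ≤ νp p := by rw [hνgdef]; exact Finset.inf'_le _ (Finset.mem_univ p)
          _ = (‖gtil p‖/2)^2 := by rw [hνp]; dsimp only; rw [if_neg hg]
      have hsqrt : Real.sqrt Δ ≤ ‖gtil p‖/2 := by
        calc Real.sqrt Δ ≤ Real.sqrt ((‖gtil p‖/2)^2) :=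
              Real.sqrt_le_sqrt (by linarith)
          _ = ‖gtil p‖/2 := Real.sqrt_sq (by positivity)
      have hcle1 : c ≤ 1 := by
        calc c ≤ cp p := Finset.inf'_le _ (Finset.mem_univ p)
          _ ≤ 1 := by rw [hcp]; dsimp only; rw [if_neg hg]
      calc c * Real.sqrt Δ ≤ 1 * Real.sqrt Δ :=
            mul_le_mul_of_nonneg_right hcle1 (Real.sqrt_nonneg _)
        _ = Real.sqrt Δ := one_mul _
        _ ≤ ‖gtil p‖/2 := hsqrt
        _ ≤ ‖gtil p + Ttil A θ p y‖ := hlower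
        _ ≤ ‖v‖ := hvge
  -- convert to the extended metric statement
  have hedist : edist 0 v = ENNReal.ofReal ‖v‖ := by
    rw [edist_dist, dist_zero_left]
  rw [hedist]
  exact ENNReal.ofReal_le_ofReal hvnorm

end S16

/-- The least squares loss with MCP regularization is a KL function
with exponent `1/2`. -/
theorem stmt_16 {m n : ℕ}
    (A : EuclideanSpace ℝ (Fin n) →ₗ[ℝ] EuclideanSpace ℝ (Fin m))
    (b : EuclideanSpace ℝ (Fin m))
    (lam θ : ℝ) (hlam : 0 < lam) (hθ : 0 < θ)
    (f : EuclideanSpace ℝ (Fin n) → ℝ)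
    (hf : ∀ x, f x = 1/2 * ‖A x - b‖^2 + ∑ i, mcp lam θ (x i)) :
    IsKL (fun x => ((f x : ℝ) : EReal)) (1/2) := by
  have heq : (fun x => ((f x : ℝ) : EReal))
      = (fun x => ((S16.ff A b lam θ x : ℝ) : EReal)) := by
    funext x
    rw [hf x]
    rfl
  rw [heq]
  exact S16.main_kl A b lam θ hlam hθ

end
end

section
/- Let f = h + g, where h : ℝ^n → ℝ is continuously differentiable with ∇h Lipschitz continuous with constant L > 0 and g : ℝ^n → (−∞,∞] is proper closed. Suppose inf f > −∞ and f is a KL function with exponent 1/2. Let {x^k} be generated by the proximal gradient method x^{k+1} ∈ Argmin_{x∈ℝ^n} { ⟨∇h(x^k), x − x^k⟩ + (1/(2γ_k))‖x − x^k‖² + g(x) }, where 0 < inf_k γ_k ≤ sup_k γ_k < 1/L, and suppose {x^k} is bounded. Then {x^k} converges to a stationary point x̄ of f (i.e., 0 ∈ ∂f(x̄)) locally linearly: there exist M > 0 and q ∈ (0,1) such that ‖x^k − x̄‖ ≤ M q^k for all large k. -/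
open Filter Topology Metric Set
open scoped RealInnerProductSpace

noncomputable section

variable {E : Type*} [NormedAddCommGroup E] [InnerProductSpace ℝ E]

lemma line_hasDerivAt (x d : E) (t : ℝ) : HasDerivAt (fun s : ℝ => x + s • d) d t := by
  simpa using ((hasDerivAt_id t).smul_const d).const_add x

lemma descent_lemma [CompleteSpace E] (h : E → ℝ) (h' : E → E)
    (hgrad : ∀ x, HasGradientAt h (h' x) x)
    (L : ℝ) (hL : 0 ≤ L) (hlip : LipschitzWith (Real.toNNReal L) h') (x y : E) :
    h y ≤ h x + ⟪h' x, y - x⟫ + L / 2 * ‖y - x‖ ^ 2 := by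
  set d := y - x with hd
  set ψ : ℝ → ℝ := fun t => h (x + t • d) - t * ⟪h' x, d⟫ - L / 2 * t ^ 2 * ‖d‖ ^ 2 with hψ
  have hder : ∀ t : ℝ, HasDerivAt ψ (⟪h' (x + t • d), d⟫ - ⟪h' x, d⟫ - L * t * ‖d‖ ^ 2) t := by
    intro t
    have h1 : HasDerivAt (fun s : ℝ => h (x + s • d)) ⟪h' (x + t • d), d⟫ t := by
      have := ((hgrad (x + t • d)).hasFDerivAt).comp_hasDerivAt t (line_hasDerivAt x d t)
      simpa [InnerProductSpace.toDual_apply_apply, Function.comp_def] using this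
    have h2 : HasDerivAt (fun s : ℝ => s * ⟪h' x, d⟫) ⟪h' x, d⟫ t := by
      simpa using (hasDerivAt_id t).mul_const ⟪h' x, d⟫
    have h3 : HasDerivAt (fun s : ℝ => L / 2 * s ^ 2 * ‖d‖ ^ 2) (L * t * ‖d‖ ^ 2) t := by
      have := ((hasDerivAt_pow 2 t).const_mul (L / 2)).mul_const (‖d‖ ^ 2)
      convert this using 1
      · rfl
      · rfl
      · rw [show (2:ℕ) - 1 = 1 from rfl]; push_cast; ring
    exact (h1.sub h2).sub h3
  have hmono : ψ 1 ≤ ψ 0 := by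
    have hAnti : AntitoneOn ψ (Icc (0:ℝ) 1) := by
      apply antitoneOn_of_deriv_nonpos (convex_Icc 0 1)
      · exact Continuous.continuousOn (continuous_iff_continuousAt.2
          (fun t => (hder t).continuousAt))
      · intro t _
        exact (hder t).differentiableAt.differentiableWithinAt
      · intro t ht
        rw [(hder t).deriv]
        rw [interior_Icc] at ht
        have hb : ⟪h' (x + t • d) - h' x, d⟫ ≤ L * t * ‖d‖ ^ 2 := by
          calc ⟪h' (x + t • d) - h' x, d⟫ ≤ ‖h' (x + t • d) - h' x‖ * ‖d‖ :=
                real_inner_le_norm _ _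
            _ ≤ L * ‖t • d‖ * ‖d‖ := by
                have := hlip.dist_le_mul (x + t • d) x
                rw [dist_eq_norm, dist_eq_norm] at this
                simp only [add_sub_cancel_left] at this
                have hc : (Real.toNNReal L : ℝ) = L := Real.coe_toNNReal L hL
                rw [hc] at this
                exact mul_le_mul_of_nonneg_right this (norm_nonneg d)
            _ = L * t * ‖d‖ ^ 2 := by
                rw [norm_smul, Real.norm_eq_abs, abs_of_pos ht.1]; ring
        rw [inner_sub_left] at hb
        linarith
    exact hAnti (by norm_num) (by norm_num) (by norm_num)
  have h0 : ψ 0 = h x := by simp [hψ]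
  have h1 : ψ 1 = h y - ⟪h' x, d⟫ - L / 2 * ‖d‖ ^ 2 := by
    simp [hψ, hd]
  rw [h0, h1] at hmono
  linarith

lemma reg_mem_lim {f : E → EReal} {x v : E} (hv : v ∈ regSubdiff f x) : v ∈ limSubdiff f x :=
  ⟨hv.1, fun _ => x, fun _ => v, tendsto_const_nhds, tendsto_const_nhds, tendsto_const_nhds,
    fun _ => hv⟩


set_option maxHeartbeats 1000000 in
/-- Local linear convergence of the proximal gradient method
under a KL exponent of `1/2`. -/
theorem stmt_17 {n : ℕ} (h : EuclideanSpace ℝ (Fin n) → ℝ)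
    (h' : EuclideanSpace ℝ (Fin n) → EuclideanSpace ℝ (Fin n))
    (hgrad : ∀ x, HasGradientAt h (h' x) x)
    (L : ℝ) (hL : 0 < L) (hlip : LipschitzWith (Real.toNNReal L) h')
    (g : EuclideanSpace ℝ (Fin n) → EReal)
    (hgproper : ProperFn g) (hgclosed : LowerSemicontinuous g)
    (f : EuclideanSpace ℝ (Fin n) → EReal) (hf : ∀ x, f x = ((h x : ℝ) : EReal) + g x)
    (B : ℝ) (hbdd_below : ∀ x, (B : EReal) ≤ f x)
    (hKL : IsKL f (1/2))
    (γ : ℕ → ℝ) (γlo γhi : ℝ) (hγlo : 0 < γlo) (hγhi : γhi < 1/L)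
    (hγ : ∀ k, γlo ≤ γ k ∧ γ k ≤ γhi)
    (x : ℕ → EuclideanSpace ℝ (Fin n))
    (hiter : ∀ k, ∀ y : EuclideanSpace ℝ (Fin n),
      ((⟪h' (x k), x (k+1) - x k⟫ + 1/(2*γ k) * ‖x (k+1) - x k‖^2 : ℝ) : EReal) + g (x (k+1))
        ≤ ((⟪h' (x k), y - x k⟫ + 1/(2*γ k) * ‖y - x k‖^2 : ℝ) : EReal) + g y)
    (hbounded : ∃ R : ℝ, ∀ k, ‖x k‖ ≤ R) :
    ∃ xbar : EuclideanSpace ℝ (Fin n),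
      (0 : EuclideanSpace ℝ (Fin n)) ∈ limSubdiff f xbar ∧
      Tendsto x atTop (𝓝 xbar) ∧
      ∃ M > (0:ℝ), ∃ q : ℝ, 0 < q ∧ q < 1 ∧
        ∀ᶠ k in atTop, ‖x k - xbar‖ ≤ M * q ^ k := by
  -- basic positivity facts
  have hγpos : ∀ k, 0 < γ k := fun k => lt_of_lt_of_le hγlo (hγ k).1
  have hγhipos : 0 < γhi := lt_of_lt_of_le (hγpos 0) (hγ 0).2
  set d : ℕ → EuclideanSpace ℝ (Fin n) := fun k => x (k+1) - x k with hdd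
  set δ : ℝ := 1/(2*γhi) - L/2 with hδdef
  have hδ : 0 < δ := by
    have h1 : γhi * L < 1 := (lt_div_iff₀ hL).1 hγhi
    rw [hδdef, sub_pos, lt_div_iff₀ (by positivity : (0:ℝ) < 2 * γhi)]
    linarith
  -- finiteness of g along the iterates
  have hgfin : ∀ k, g (x (k+1)) ≠ ⊤ := by
    intro k heq
    obtain ⟨y0, hy0⟩ := hgproper.2
    have h1 := hiter k y0
    rw [heq, EReal.add_top_of_ne_bot (EReal.coe_ne_bot _)] at h1
    have h2 : ((⟪h' (x k), y0 - x k⟫ + 1/(2*γ k) * ‖y0 - x k‖^2 : ℝ) : EReal) + g y0 < ⊤ :=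
      EReal.add_lt_top (EReal.coe_ne_top _) hy0.ne
    exact absurd h1 h2.not_ge
  have hgbot : ∀ z, g z ≠ ⊥ := hgproper.1
  set G : ℕ → ℝ := fun k => (g (x k)).toReal with hGdef
  have hgval : ∀ k, g (x (k+1)) = ((G (k+1) : ℝ) : EReal) :=
    fun k => (EReal.coe_toReal (hgfin k) (hgbot _)).symm
  set φ : ℕ → ℝ := fun k => h (x k) + G k with hφdef
  have hfval : ∀ k, f (x (k+1)) = ((φ (k+1) : ℝ) : EReal) := by
    intro k; rw [hf, hgval k, ← EReal.coe_add]
  -- real form of the iteration inequality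
  have hiterR : ∀ k, ∀ y, g y ≠ ⊤ →
      ⟪h' (x k), d k⟫ + 1/(2*γ k) * ‖d k‖^2 + G (k+1)
        ≤ ⟪h' (x k), y - x k⟫ + 1/(2*γ k) * ‖y - x k‖^2 + (g y).toReal := by
    intro k y hy
    have h1 := hiter k y
    rw [hgval k, ← EReal.coe_toReal hy (hgbot y), ← EReal.coe_add, ← EReal.coe_add,
      EReal.coe_le_coe_iff] at h1
    exact h1
  -- sufficient decrease
  have hdesc : ∀ k, φ (k+2) ≤ φ (k+1) - δ * ‖d (k+1)‖^2 := by
    intro k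
    have h1 := hiterR (k+1) (x (k+1)) (hgfin k)
    simp only [sub_self, inner_zero_right, norm_zero] at h1
    have h2 : h (x (k+2)) ≤ h (x (k+1)) + ⟪h' (x (k+1)), d (k+1)⟫ + L/2 * ‖d (k+1)‖^2 :=
      descent_lemma h h' hgrad L hL.le hlip (x (k+1)) (x (k+2))
    have h3 : 1/(2*γhi) ≤ 1/(2*γ (k+1)) := by
      apply one_div_le_one_div_of_le (by have := hγpos (k+1); linarith)
      have := (hγ (k+1)).2; linarith
    have h4 : 1/(2*γhi) * ‖d (k+1)‖^2 ≤ 1/(2*γ (k+1)) * ‖d (k+1)‖^2 :=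
      mul_le_mul_of_nonneg_right h3 (sq_nonneg _)
    simp only [hφdef, hδdef]
    have hG : (g (x (k+1))).toReal = G (k+1) := rfl
    rw [hG] at h1
    nlinarith [h1, h2, h4]
  have hφanti : Antitone (fun k => φ (k+1)) := by
    apply antitone_nat_of_succ_le
    intro k
    have := hdesc k
    linarith [mul_nonneg hδ.le (sq_nonneg ‖d (k+1)‖)]
  have hφbdd : ∀ k, B ≤ φ (k+1) := by
    intro k
    have := hbdd_below (x (k+1))
    rw [hfval k, EReal.coe_le_coe_iff] at this
    exact this
  set ℓ : ℝ := ⨅ k, φ (k+1) with hℓdef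
  have hφlim : Tendsto (fun k => φ (k+1)) atTop (𝓝 ℓ) := by
    apply tendsto_atTop_ciInf hφanti ⟨B, fun z hz => by obtain ⟨k, rfl⟩ := hz; exact hφbdd k⟩
  have hℓle : ∀ k, ℓ ≤ φ (k+1) := fun k =>
    ciInf_le ⟨B, fun z hz => by obtain ⟨k, rfl⟩ := hz; exact hφbdd k⟩ k
  set r : ℕ → ℝ := fun k => φ k - ℓ with hrdef
  have hrnn : ∀ k, 0 ≤ r (k+1) := fun k => sub_nonneg.2 (hℓle k)
  have hdb : ∀ k, ‖d (k+1)‖ ≤ Real.sqrt (r (k+1) / δ) := by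
    intro k
    have h1 := hdesc k
    have h2 := hℓle (k+1)
    have h3 : ‖d (k+1)‖^2 ≤ r (k+1) / δ := by
      rw [le_div_iff₀ hδ]
      show ‖d (k+1)‖^2 * δ ≤ φ (k+1) - ℓ
      linarith
    calc ‖d (k+1)‖ = Real.sqrt (‖d (k+1)‖^2) := (Real.sqrt_sq (norm_nonneg _)).symm
      _ ≤ Real.sqrt (r (k+1) / δ) := Real.sqrt_le_sqrt h3
  -- subsequence convergence
  obtain ⟨R, hR⟩ := hbounded
  obtain ⟨xbar, -, ψ, hψmono, hψlim⟩ :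
      ∃ xbar ∈ closure (closedBall (0 : EuclideanSpace ℝ (Fin n)) R), ∃ ψ : ℕ → ℕ, StrictMono ψ ∧
        Tendsto (fun j => x (ψ j + 1)) atTop (𝓝 xbar) := by
    obtain ⟨xbar, hmem, ψ, hψ1, hψ2⟩ := tendsto_subseq_of_bounded
      (isBounded_closedBall (x := (0 : EuclideanSpace ℝ (Fin n))) (r := R))
      (fun j => mem_closedBall_zero_iff.2 (hR (j+1)) :
        ∀ j, (fun j => x (j+1)) j ∈ closedBall 0 R)
    exact ⟨xbar, hmem, ψ, hψ1, hψ2⟩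
  -- the subgradients
  set v : ℕ → EuclideanSpace ℝ (Fin n) := fun k => h' (x (k+1)) - h' (x k) - (γ k)⁻¹ • d k
    with hvdef
  set K : ℝ := L + 1/γlo with hKdef
  have hKpos : 0 < K := by positivity
  have hvb : ∀ k, ‖v k‖ ≤ K * ‖d k‖ := by
    intro k
    have h1 : ‖v k‖ ≤ ‖h' (x (k+1)) - h' (x k)‖ + ‖(γ k)⁻¹ • d k‖ := norm_sub_le _ _
    have h2 : ‖h' (x (k+1)) - h' (x k)‖ ≤ L * ‖d k‖ := by
      have := hlip.dist_le_mul (x (k+1)) (x k)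
      rw [dist_eq_norm, dist_eq_norm, Real.coe_toNNReal L hL.le] at this
      exact this
    have h3 : ‖(γ k)⁻¹ • d k‖ = (γ k)⁻¹ * ‖d k‖ := by
      rw [norm_smul, Real.norm_eq_abs, abs_of_pos (inv_pos.2 (hγpos k))]
    have h4 : (γ k)⁻¹ ≤ 1/γlo := by
      rw [one_div]
      exact inv_anti₀ hγlo (hγ k).1
    have h5 : (γ k)⁻¹ * ‖d k‖ ≤ 1/γlo * ‖d k‖ := mul_le_mul_of_nonneg_right h4 (norm_nonneg _)
    rw [hKdef]
    rw [h3] at h1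
    linarith [norm_nonneg (d k)]
  have hvreg : ∀ k, v k ∈ regSubdiff f (x (k+1)) := by
    intro k
    constructor
    · rw [hfval k]; exact EReal.coe_lt_top _
    intro ε hε
    have hfd := (hgrad (x (k+1))).hasFDerivAt
    have hlo := (hasFDerivAt_iff_isLittleO_nhds_zero.1 hfd)
    have hlo2 := hfd.isLittleO
    have E1 := Asymptotics.isLittleO_iff.1 hlo2 (half_pos hε)
    have E2 : Metric.ball (x (k+1)) (ε * γ k) ∈ 𝓝 (x (k+1)) :=
      Metric.ball_mem_nhds _ (by have := hγpos k; positivity)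
    filter_upwards [E1, E2] with z hz1 hz2
    by_cases hz : g z = ⊤
    · have : f z = ⊤ := by rw [hf z, hz, EReal.add_top_of_ne_bot (EReal.coe_ne_bot _)]
      rw [this]; exact le_top
    · rw [hfval k, hf z, ← EReal.coe_toReal hz (hgbot z), ← EReal.coe_add, ← EReal.coe_add,
        EReal.coe_le_coe_iff]
      set w := z - x (k+1) with hw
      have H1 := hiterR k z hz
      have H2 : |h z - h (x (k+1)) - ⟪h' (x (k+1)), w⟫| ≤ ε/2 * ‖w‖ := by
        simpa [InnerProductSpace.toDual_apply_apply, Real.norm_eq_abs] using hz1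
      have H3 : ‖w‖ ≤ ε * γ k := by
        have := mem_ball_iff_norm.1 hz2
        rw [← hw] at this
        exact this.le
      have hzx : z - x k = w + d k := by rw [hw]; show z - x k = z - x (k+1) + (x (k+1) - x k); abel
      have Hexp : ‖z - x k‖^2 = ‖w‖^2 + 2*⟪w, d k⟫ + ‖d k‖^2 := by
        rw [hzx, norm_add_sq_real]
      have Hinner : ⟪h' (x k), z - x k⟫ = ⟪h' (x k), w⟫ + ⟪h' (x k), d k⟫ := by
        rw [hzx, inner_add_right]
      have Hv : ⟪v k, w⟫ = ⟪h' (x (k+1)), w⟫ - ⟪h' (x k), w⟫ - (γ k)⁻¹ * ⟪d k, w⟫ := by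
        rw [hvdef]
        simp only [inner_sub_left, real_inner_smul_left]
      have Hcomm : ⟪d k, w⟫ = ⟪w, d k⟫ := real_inner_comm _ _
      have hγk := hγpos k
      have key : 1/(2*γ k) * ‖w‖^2 ≤ ε/2 * ‖w‖ := by
        rw [div_mul_eq_mul_div, div_le_iff₀ (by positivity)]
        linarith [mul_le_mul_of_nonneg_right H3 (norm_nonneg w), sq_abs ‖w‖,
          sq_nonneg ‖w‖, norm_nonneg w]
      have H2' : h (x (k+1)) + ⟪h' (x (k+1)), w⟫ - ε/2 * ‖w‖ ≤ h z := by
        have := abs_le.1 H2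
        linarith [this.2]
      rw [Hinner, Hexp] at H1
      rw [Hv, Hcomm]
      have hγinv : (γ k)⁻¹ = 2 * (1/(2*γ k)) := by field_simp
      rw [hγinv]
      have hφr : φ (k+1) = h (x (k+1)) + G (k+1) := rfl
      rw [hφr]
      linarith [H1, H2', key]
  -- limits along the subsequence
  have hψtop : Tendsto (fun j => ψ j + 1) atTop atTop :=
    (tendsto_add_atTop_nat 1).comp hψmono.tendsto_atTop
  have hrlim : Tendsto (fun k => r (k+1)) atTop (𝓝 0) := by
    have := hφlim.sub_const ℓ
    simpa using this
  have hdlim : Tendsto (fun k => d (k+1)) atTop (𝓝 0) := by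
    rw [tendsto_zero_iff_norm_tendsto_zero]
    apply squeeze_zero (fun k => norm_nonneg _) hdb
    have : Tendsto (fun k => Real.sqrt (r (k+1) / δ)) atTop (𝓝 (Real.sqrt (0 / δ))) :=
      (Real.continuous_sqrt.tendsto _).comp (hrlim.div_const δ)
    simpa using this
  have hdlim' : Tendsto d atTop (𝓝 0) := (tendsto_add_atTop_iff_nat 1).1 hdlim
  have hxm : Tendsto (fun j => x (ψ j)) atTop (𝓝 xbar) := by
    have h1 : Tendsto (fun j => d (ψ j)) atTop (𝓝 0) := hdlim'.comp hψmono.tendsto_atTop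
    have := hψlim.sub h1
    simp only [hdd, sub_zero] at this ⊢
    convert this using 2 with j
    abel
  -- the limit value of f
  have hcont : Continuous h := by
    have hdiff : Differentiable ℝ h := fun z => (hgrad z).differentiableAt
    exact hdiff.continuous
  have hxm2 : Tendsto (fun j => x (ψ j + 1 + 1)) atTop (𝓝 xbar) := by
    have h1 : Tendsto (fun j => d (ψ j + 1)) atTop (𝓝 0) := hdlim'.comp hψtop
    have h2 := hψlim.add h1
    rw [add_zero] at h2
    convert h2 using 2 with j
    show x (ψ j + 1 + 1) = x (ψ j + 1) + d (ψ j + 1)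
    simp [hdd]
  have hφψ : Tendsto (fun j => φ (ψ j + 1)) atTop (𝓝 ℓ) := hφlim.comp hψmono.tendsto_atTop
  have hφψ2 : Tendsto (fun j => φ (ψ j + 1 + 1)) atTop (𝓝 ℓ) := hφlim.comp hψtop
  have hfxbar : f xbar = (ℓ : EReal) := by
    have hle1 : f xbar ≤ (ℓ : EReal) := by
      by_contra hlt
      push_neg at hlt
      obtain ⟨b, hb1, hb2⟩ := exists_between hlt
      have hbtop : b ≠ ⊤ := (lt_of_lt_of_le hb2 le_top).ne
      have hbbot : b ≠ ⊥ := ne_bot_of_gt hb1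
      have hlsc : LowerSemicontinuousAt f xbar := by
        have h1 : LowerSemicontinuous (fun z => ((h z : ℝ) : EReal)) :=
          (continuous_coe_real_ereal.comp hcont).lowerSemicontinuous
        have h2 : LowerSemicontinuous (fun z => ((h z : ℝ) : EReal) + g z) := by
          apply h1.add' hgclosed
          intro z
          exact EReal.continuousAt_add (Or.inl (EReal.coe_ne_top _))
            (Or.inl (EReal.coe_ne_bot _))
        have h3 : f = fun z => ((h z : ℝ) : EReal) + g z := funext hf
        rw [h3]
        exact h2 xbar
      have hev : ∀ᶠ j in atTop, b < f (x (ψ j + 1)) := hψlim.eventually (hlsc b hb2)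
      have hev2 : ∀ᶠ j in atTop, b.toReal ≤ φ (ψ j + 1) := by
        filter_upwards [hev] with j hj
        rw [hfval (ψ j), ← EReal.coe_toReal hbtop hbbot, EReal.coe_lt_coe_iff] at hj
        exact hj.le
      have hble : b.toReal ≤ ℓ := ge_of_tendsto hφψ hev2
      have : (ℓ : EReal) < ((b.toReal : ℝ) : EReal) := by
        rwa [EReal.coe_toReal hbtop hbbot]
      rw [EReal.coe_lt_coe_iff] at this
      linarith
    have hle2 : (ℓ : EReal) ≤ f xbar := by
      by_cases hgt : g xbar = ⊤
      · rw [hf xbar, hgt, EReal.add_top_of_ne_bot (EReal.coe_ne_bot _)]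
        exact le_top
      · have hfb : f xbar = ((h xbar + (g xbar).toReal : ℝ) : EReal) := by
          rw [hf xbar, EReal.coe_add]
          exact congrArg (fun t => ((h xbar : ℝ) : EReal) + t)
            (EReal.coe_toReal hgt (hgbot xbar)).symm
        rw [hfb, EReal.coe_le_coe_iff]
        set gbar := (g xbar).toReal with hgbar
        have kb : ∀ j, φ (ψ j + 1 + 1) ≤ h (x (ψ j + 1 + 1)) + gbar
            + ⟪h' (x (ψ j + 1)), xbar - x (ψ j + 1) - d (ψ j + 1)⟫
            + 1/(2*γlo) * ‖xbar - x (ψ j + 1)‖^2 := by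
          intro j
          have H := hiterR (ψ j + 1) xbar hgt
          have hinner : ⟪h' (x (ψ j + 1)), xbar - x (ψ j + 1) - d (ψ j + 1)⟫
              = ⟪h' (x (ψ j + 1)), xbar - x (ψ j + 1)⟫ - ⟪h' (x (ψ j + 1)), d (ψ j + 1)⟫ :=
            inner_sub_right _ _ _
          have hγj := hγpos (ψ j + 1)
          have hc1 : 1/(2*γ (ψ j + 1)) * ‖xbar - x (ψ j + 1)‖^2
              ≤ 1/(2*γlo) * ‖xbar - x (ψ j + 1)‖^2 := by
            apply mul_le_mul_of_nonneg_right _ (sq_nonneg _)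
            apply one_div_le_one_div_of_le (by linarith)
            have := (hγ (ψ j + 1)).1; linarith
          have hc2 : 0 ≤ 1/(2*γ (ψ j + 1)) * ‖d (ψ j + 1)‖^2 := by positivity
          have hφe : φ (ψ j + 1 + 1) = h (x (ψ j + 1 + 1)) + G (ψ j + 1 + 1) := rfl
          rw [hφe, hinner]
          linarith [H, hc1, hc2]
        have hrhs : Tendsto (fun j => h (x (ψ j + 1 + 1)) + gbar
            + ⟪h' (x (ψ j + 1)), xbar - x (ψ j + 1) - d (ψ j + 1)⟫
            + 1/(2*γlo) * ‖xbar - x (ψ j + 1)‖^2) atTop (𝓝 (h xbar + gbar)) := by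
          have t1 : Tendsto (fun j => h (x (ψ j + 1 + 1)) + gbar) atTop (𝓝 (h xbar + gbar)) :=
            ((hcont.tendsto xbar).comp hxm2).add_const gbar
          have t2 : Tendsto (fun j => ⟪h' (x (ψ j + 1)), xbar - x (ψ j + 1) - d (ψ j + 1)⟫)
              atTop (𝓝 (⟪h' xbar, xbar - xbar - 0⟫)) := by
            apply Filter.Tendsto.inner
            · exact (hlip.continuous.tendsto xbar).comp hψlim
            · exact (tendsto_const_nhds.sub hψlim).sub (hdlim'.comp hψtop)
          have t3 : Tendsto (fun j => 1/(2*γlo) * ‖xbar - x (ψ j + 1)‖^2)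
              atTop (𝓝 (1/(2*γlo) * ‖xbar - xbar‖^2)) := by
            apply Tendsto.const_mul
            exact ((tendsto_const_nhds.sub hψlim).norm).pow 2
          have := (t1.add t2).add t3
          simpa using this
        exact le_of_tendsto_of_tendsto' hφψ2 hrhs kb
    exact le_antisymm hle1 hle2
  -- stationarity
  have hzero : (0 : EuclideanSpace ℝ (Fin n)) ∈ limSubdiff f xbar := by
    refine ⟨by rw [hfxbar]; exact EReal.coe_lt_top _, fun j => x (ψ j + 1 + 1),
      fun j => v (ψ j + 1), hxm2, ?_, ?_, fun j => hvreg (ψ j + 1)⟩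
    · rw [hfxbar]
      have heq : (fun j => f (x (ψ j + 1 + 1))) = fun j => ((φ (ψ j + 1 + 1) : ℝ) : EReal) := by
        funext j; exact hfval (ψ j + 1)
      rw [heq, EReal.tendsto_coe]
      exact hφψ2
    · rw [tendsto_zero_iff_norm_tendsto_zero]
      apply squeeze_zero (fun j => norm_nonneg _) (fun j => hvb (ψ j + 1))
      have h1 : Tendsto (fun j => ‖d (ψ j + 1)‖) atTop (𝓝 0) := by
        have := (hdlim'.comp hψtop).norm
        simpa using this
      have := h1.const_mul K
      simpa using this
  refine ⟨xbar, hzero, ?_⟩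
  -- KL property at xbar
  obtain ⟨c, hc, ε, hε, ν, hν, hKLineq⟩ := hKL xbar ⟨0, hzero⟩
  -- threshold below f xbar + ν
  obtain ⟨t, hℓt, htν⟩ : ∃ t : ℝ, ℓ < t ∧ ((t : ℝ) : EReal) ≤ (ℓ : EReal) + ν := by
    by_cases hνtop : ν = ⊤
    · refine ⟨ℓ + 1, by linarith, ?_⟩
      rw [hνtop, EReal.add_top_of_ne_bot (EReal.coe_ne_bot _)]
      exact le_top
    · have hνbot : ν ≠ ⊥ := ne_of_gt (lt_trans EReal.bot_lt_zero hν)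
      refine ⟨ℓ + ν.toReal, ?_, ?_⟩
      · have hν2 : (0 : EReal) < (ν.toReal : EReal) := by
          rwa [EReal.coe_toReal hνtop hνbot]
        have : 0 < ν.toReal := EReal.coe_pos.1 hν2
        linarith
      · rw [EReal.coe_add]
        exact add_le_add_right (le_of_eq (EReal.coe_toReal hνtop hνbot)) _
  -- the key KL step
  have hKLstep : ∀ k, 1 ≤ k → ‖x (k+1) - xbar‖ ≤ ε → 0 < r (k+1) → φ (k+1) < t →
      r (k+1) ≤ (K^2 / (K^2 + c^2 * δ)) * r k := by
    intro k hk hball hrp hφt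
    have h1 : f xbar < f (x (k+1)) := by
      rw [hfxbar, hfval k, EReal.coe_lt_coe_iff]
      have h0 : (0:ℝ) < φ (k+1) - ℓ := hrp
      linarith
    have h2 : f (x (k+1)) < f xbar + ν := by
      rw [hfxbar, hfval k]
      exact lt_of_lt_of_le (EReal.coe_lt_coe_iff.2 hφt) htν
    have hisq := hKLineq (x (k+1)) hball h1 h2
    have hto : (f (x (k+1)) - f xbar).toReal = r (k+1) := by
      rw [hfxbar, hfval k, ← EReal.coe_sub, EReal.toReal_coe]
    rw [hto] at hisq
    have hub : EMetric.infEdist 0 (limSubdiff f (x (k+1))) ≤ ENNReal.ofReal ‖v k‖ := by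
      have hmem := reg_mem_lim (hvreg k)
      calc EMetric.infEdist 0 (limSubdiff f (x (k+1))) ≤ edist 0 (v k) :=
            EMetric.infEdist_le_edist_of_mem hmem
        _ = ENNReal.ofReal ‖v k‖ := by rw [edist_dist, dist_zero_left]
    have hchain := le_trans hisq hub
    rw [ENNReal.ofReal_le_ofReal_iff (norm_nonneg _)] at hchain
    have hsq : r (k+1) ^ ((1:ℝ)/2) = Real.sqrt (r (k+1)) := (Real.sqrt_eq_rpow _).symm
    rw [show (1/2 : ℝ) = (1:ℝ)/2 by norm_num, hsq] at hchain
    have hA : c * Real.sqrt (r (k+1)) ≤ K * ‖d k‖ := le_trans hchain (hvb k)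
    obtain ⟨k', rfl⟩ : ∃ k', k = k' + 1 := ⟨k - 1, by omega⟩
    have hB : δ * ‖d (k'+1)‖^2 ≤ r (k'+1) - r (k'+1+1) := by
      have := hdesc k'
      have e1 : r (k'+1) = φ (k'+1) - ℓ := rfl
      have e2 : r (k'+1+1) = φ (k'+2) - ℓ := rfl
      rw [e1, e2]
      linarith
    rw [div_mul_eq_mul_div, le_div_iff₀ (by positivity)]
    have hss : Real.sqrt (r (k'+1+1)) * Real.sqrt (r (k'+1+1)) = r (k'+1+1) :=
      Real.mul_self_sqrt (hrnn _)
    have hsq2 : (c * Real.sqrt (r (k'+1+1))) * (c * Real.sqrt (r (k'+1+1)))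
        ≤ (K * ‖d (k'+1)‖) * (K * ‖d (k'+1)‖) :=
      mul_self_le_mul_self (by positivity) hA
    have hss2 : Real.sqrt (r (k'+1+1)) * Real.sqrt (r (k'+1+1)) = r (k'+1+1) := hss
    have q1 : c^2 * r (k'+1+1) ≤ K^2 * ‖d (k'+1)‖^2 := by
      calc c^2 * r (k'+1+1) = (c * Real.sqrt (r (k'+1+1))) * (c * Real.sqrt (r (k'+1+1))) := by
            rw [show (c * Real.sqrt (r (k'+1+1))) * (c * Real.sqrt (r (k'+1+1)))
              = c^2 * (Real.sqrt (r (k'+1+1)) * Real.sqrt (r (k'+1+1))) by ring, hss2]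
        _ ≤ (K * ‖d (k'+1)‖) * (K * ‖d (k'+1)‖) := hsq2
        _ = K^2 * ‖d (k'+1)‖^2 := by ring
    have q2 : c^2 * δ * r (k'+1+1) ≤ K^2 * (r (k'+1) - r (k'+1+1)) :=
      calc c^2 * δ * r (k'+1+1) = δ * (c^2 * r (k'+1+1)) := by ring
        _ ≤ δ * (K^2 * ‖d (k'+1)‖^2) := mul_le_mul_of_nonneg_left q1 hδ.le
        _ = K^2 * (δ * ‖d (k'+1)‖^2) := by ring
        _ ≤ K^2 * (r (k'+1) - r (k'+1+1)) := mul_le_mul_of_nonneg_left hB (sq_nonneg K)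
    linarith [q2]
  set ρ : ℝ := K^2 / (K^2 + c^2 * δ) with hρdef
  have hρ0 : 0 < ρ := by positivity
  have hρ1 : ρ < 1 := by
    rw [hρdef, div_lt_one (by positivity)]
    have : 0 < c^2 * δ := by positivity
    linarith
  set σ : ℝ := Real.sqrt ρ with hσdef
  have hσ0 : 0 < σ := Real.sqrt_pos.2 hρ0
  have hσ1 : σ < 1 := by
    rw [hσdef, show (1:ℝ) = Real.sqrt 1 by simp]
    exact Real.sqrt_lt_sqrt hρ0.le hρ1
  -- case analysis: does r vanish at some index?
  by_cases hcase : ∃ k, r (k+1) = 0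
  · obtain ⟨K0, hK0⟩ := hcase
    have hd0 : ∀ k, K0 ≤ k → d (k+1) = 0 := by
      intro k hk
      have h1 := hdesc k
      have h2 : φ (k+1) - ℓ = 0 := by
        have ha : φ (k+1) ≤ φ (K0+1) := hφanti hk
        have hb : ℓ ≤ φ (k+1) := hℓle k
        have hcc : φ (K0+1) - ℓ = 0 := hK0
        linarith
      have h3 : φ (k+2) - ℓ = 0 := by
        have ha : φ (k+2) ≤ φ (K0+1) := hφanti (show K0 ≤ k + 1 by omega)
        have hb : ℓ ≤ φ (k+2) := hℓle (k+1)
        have hcc : φ (K0+1) - ℓ = 0 := hK0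
        linarith
      have h4 : δ * ‖d (k+1)‖^2 ≤ 0 := by linarith
      have h5 : ‖d (k+1)‖^2 ≤ 0 := by
        by_contra hcon
        push_neg at hcon
        nlinarith
      have h6 : ‖d (k+1)‖ = 0 := by
        have := sq_nonneg ‖d (k+1)‖
        have h7 : ‖d (k+1)‖^2 = 0 := le_antisymm h5 this
        exact pow_eq_zero_iff (by norm_num) |>.1 h7
      exact norm_eq_zero.1 h6
    have hconst : ∀ m, x (K0 + 1 + m) = x (K0 + 1) := by
      intro m
      induction m with
      | zero => rfl
      | succ m ih =>
        have hxs : x (K0 + 1 + (m+1)) = x (K0 + 1 + m) + d (K0 + 1 + m) := by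
          show x (K0 + 1 + m + 1) = _
          simp [hdd]
        have hz : d (K0 + 1 + m) = 0 := by
          have := hd0 (K0 + m) (by omega)
          rwa [show K0 + m + 1 = K0 + 1 + m by omega] at this
        rw [hxs, hz, add_zero, ih]
    have hevc : ∀ᶠ k in atTop, x k = x (K0 + 1) := by
      filter_upwards [eventually_ge_atTop (K0+1)] with k hk
      have := hconst (k - (K0+1))
      rwa [show K0 + 1 + (k - (K0+1)) = k by omega] at this
    have hxeq : xbar = x (K0 + 1) := by
      have hev2 : ∀ᶠ j in atTop, x (ψ j + 1) = x (K0 + 1) :=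
        hψtop.eventually hevc
      exact tendsto_nhds_unique (hψlim.congr' hev2) tendsto_const_nhds
    constructor
    · rw [hxeq]
      have hconst2 : Tendsto (fun _ : ℕ => x (K0+1)) atTop (𝓝 (x (K0+1))) :=
        tendsto_const_nhds
      exact hconst2.congr' (hevc.mono fun k hk => hk.symm)
    · refine ⟨1, one_pos, 1/2, by norm_num, by norm_num, ?_⟩
      filter_upwards [hevc] with k hk
      rw [hk, ← hxeq, sub_self, norm_zero]
      positivity
  · push_neg at hcase
    have hrpos : ∀ k, 0 < r (k+1) := fun k => lt_of_le_of_ne (hrnn k) (Ne.symm (hcase k))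
    have h1σ : 0 < 1 - σ := by linarith
    set θ0 : ℝ := δ * (ε/2 * (1-σ))^2 with hθ0def
    have hθ0 : 0 < θ0 := by positivity
    have ev1 : ∀ᶠ j in atTop, ‖x (ψ j + 1) - xbar‖ ≤ ε/2 := by
      have hnb : ∀ᶠ z in 𝓝 xbar, ‖z - xbar‖ ≤ ε/2 := by
        filter_upwards [Metric.closedBall_mem_nhds xbar (half_pos hε)] with z hz
        rwa [mem_closedBall, dist_eq_norm] at hz
      exact hψlim.eventually hnb
    have ev2 : ∀ᶠ j in atTop, φ (ψ j + 1) < t := hφψ.eventually_lt_const hℓt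
    have ev3 : ∀ᶠ j in atTop, r (ψ j + 1) ≤ θ0 := by
      have hcomp : Tendsto (fun j => r (ψ j + 1)) atTop (𝓝 0) :=
        hrlim.comp hψmono.tendsto_atTop
      exact hcomp.eventually_le_const hθ0
    obtain ⟨j0, hj1, hj2, hj3⟩ := (ev1.and (ev2.and ev3)).exists
    set N := ψ j0 + 1 with hNdef
    have hrN : 0 < r N := hrpos (ψ j0)
    set s : ℝ := Real.sqrt (r N / δ) with hsdef
    have hs0 : 0 < s := Real.sqrt_pos.2 (div_pos hrN hδ)
    have hσne : σ ≠ 1 := ne_of_lt hσ1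
    have hgeosum : ∀ m : ℕ, ∑ i ∈ Finset.range m, σ^i ≤ (1-σ)⁻¹ := by
      intro m
      have h2 : ∑ i ∈ Finset.range m, σ^i = (1 - σ^m)/(1 - σ) := by
        rw [geom_sum_eq hσne, div_eq_div_iff (sub_ne_zero.2 hσne) h1σ.ne']
        ring
      rw [h2, div_le_iff₀ h1σ, inv_mul_cancel₀ h1σ.ne']
      have := pow_nonneg hσ0.le m
      linarith
    have hsbound : s ≤ ε/2 * (1-σ) := by
      have h2 : r N / δ ≤ (ε/2 * (1-σ))^2 := by
        rw [div_le_iff₀ hδ]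
        calc r N ≤ θ0 := hj3
          _ = (ε/2*(1-σ))^2 * δ := by rw [hθ0def]; ring
      calc s ≤ Real.sqrt ((ε/2*(1-σ))^2) := Real.sqrt_le_sqrt h2
        _ = ε/2*(1-σ) := Real.sqrt_sq (by positivity)
    have hsgeo : ∀ m : ℕ, s * ∑ i ∈ Finset.range m, σ^i ≤ ε/2 := by
      intro m
      calc s * ∑ i ∈ Finset.range m, σ^i ≤ s * (1-σ)⁻¹ :=
            mul_le_mul_of_nonneg_left (hgeosum m) hs0.le
        _ ≤ (ε/2*(1-σ)) * (1-σ)⁻¹ := mul_le_mul_of_nonneg_right hsbound (by positivity)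
        _ = ε/2 := by field_simp
    have hsqrtpow : ∀ m : ℕ, Real.sqrt (ρ^m) = σ^m := by
      intro m
      have hsq : (σ^m)^2 = ρ^m := by
        rw [← pow_mul, mul_comm m 2, pow_mul, hσdef, Real.sq_sqrt hρ0.le]
      rw [← hsq, Real.sqrt_sq (pow_nonneg hσ0.le m)]
    have hdN : ∀ m, r (N + m) ≤ ρ^m * r N → ‖d (N + m)‖ ≤ s * σ^m := by
      intro m hr
      have e1 : N + m = (ψ j0 + m) + 1 := by omega
      have hb1 : ‖d (N+m)‖ ≤ Real.sqrt (r (N+m)/δ) := by rw [e1]; exact hdb (ψ j0 + m)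
      have hb2 : r (N+m)/δ ≤ (ρ^m * r N)/δ := (div_le_div_iff_of_pos_right hδ).2 hr
      calc ‖d (N+m)‖ ≤ Real.sqrt ((ρ^m * r N)/δ) := hb1.trans (Real.sqrt_le_sqrt hb2)
        _ = Real.sqrt (ρ^m * (r N/δ)) := by rw [mul_div_assoc]
        _ = σ^m * s := by rw [Real.sqrt_mul (pow_nonneg hρ0.le m), hsqrtpow m, hsdef]
        _ = s * σ^m := mul_comm _ _
    have hind : ∀ m, ‖x (N + m) - xbar‖ ≤ ε/2 + s * ∑ i ∈ Finset.range m, σ^i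
        ∧ r (N + m) ≤ ρ^m * r N := by
      intro m
      induction m with
      | zero =>
        constructor
        · simpa using hj1
        · simp
      | succ m ih =>
        obtain ⟨ih1, ih2⟩ := ih
        have hdm : ‖d (N + m)‖ ≤ s * σ^m := hdN m ih2
        have hstep : x (N + (m+1)) - xbar = (x (N + m) - xbar) + d (N + m) := by
          show x (N + m + 1) - xbar = _
          simp only [hdd]
          abel
        have hb1 : ‖x (N + (m+1)) - xbar‖ ≤ ε/2 + s * ∑ i ∈ Finset.range (m+1), σ^i := by
          rw [hstep]
          calc ‖(x (N+m) - xbar) + d (N+m)‖ ≤ ‖x (N+m) - xbar‖ + ‖d (N+m)‖ := norm_add_le _ _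
            _ ≤ (ε/2 + s * ∑ i ∈ Finset.range m, σ^i) + s * σ^m := add_le_add ih1 hdm
            _ = ε/2 + s * ∑ i ∈ Finset.range (m+1), σ^i := by
                rw [Finset.sum_range_succ]; ring
        refine ⟨hb1, ?_⟩
        have hball : ‖x (N + m + 1) - xbar‖ ≤ ε := by
          have h2 := hsgeo (m+1)
          calc ‖x (N+m+1) - xbar‖ ≤ ε/2 + s * ∑ i ∈ Finset.range (m+1), σ^i := hb1
            _ ≤ ε/2 + ε/2 := by linarith
            _ = ε := by ring
        have hrp : 0 < r (N + m + 1) := by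
          have := hrpos (ψ j0 + m + 1)
          rwa [show ψ j0 + m + 1 + 1 = N + m + 1 by omega] at this
        have hφt : φ (N + m + 1) < t := by
          have hle : φ (ψ j0 + m + 1 + 1) ≤ φ (ψ j0 + 1) :=
            hφanti (show ψ j0 ≤ ψ j0 + m + 1 by omega)
          rw [show ψ j0 + m + 1 + 1 = N + m + 1 by omega] at hle
          exact lt_of_le_of_lt hle hj2
        have hkl := hKLstep (N + m) (by omega) hball hrp hφt
        calc r (N + (m+1)) ≤ ρ * r (N + m) := hkl
          _ ≤ ρ * (ρ^m * r N) := mul_le_mul_of_nonneg_left ih2 hρ0.le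
          _ = ρ^(m+1) * r N := by ring
    have hdm' : ∀ m, ‖d (N + m)‖ ≤ s * σ^m := fun m => hdN m (hind m).2
    have htel : ∀ m p, ‖x (N + m + p) - x (N + m)‖ ≤ s * σ^m * (1-σ)⁻¹ := by
      intro m p
      have h1 : dist (x (N+m)) (x (N+m+p))
          ≤ ∑ i ∈ Finset.range p, dist (x (N+m+i)) (x (N+m+i+1)) := by
        have := dist_le_range_sum_dist (fun i => x (N+m+i)) p
        simpa [add_assoc] using this
      have h2 : ∑ i ∈ Finset.range p, dist (x (N+m+i)) (x (N+m+i+1))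
          ≤ ∑ i ∈ Finset.range p, s * σ^m * σ^i := by
        apply Finset.sum_le_sum
        intro i _
        rw [dist_eq_norm, norm_sub_rev]
        have hh := hdm' (m + i)
        rw [show N + (m+i) = N + m + i by omega] at hh
        calc ‖x (N+m+i+1) - x (N+m+i)‖ = ‖d (N+m+i)‖ := rfl
          _ ≤ s * σ^(m+i) := hh
          _ = s * σ^m * σ^i := by rw [pow_add]; ring
      have h3 : ∑ i ∈ Finset.range p, s * σ^m * σ^i
          = s * σ^m * ∑ i ∈ Finset.range p, σ^i := by rw [Finset.mul_sum]
      have h4 : s * σ^m * ∑ i ∈ Finset.range p, σ^i ≤ s * σ^m * (1-σ)⁻¹ :=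
        mul_le_mul_of_nonneg_left (hgeosum p) (by positivity)
      have h5 : ‖x (N+m+p) - x (N+m)‖ = dist (x (N+m)) (x (N+m+p)) := by
        rw [dist_eq_norm, norm_sub_rev]
      rw [h5]
      linarith
    have htail : ∀ m, ‖x (N + m) - xbar‖ ≤ s * σ^m * (1-σ)⁻¹ := by
      intro m
      have hlim2 : Tendsto (fun j => ‖x (ψ j + 1) - x (N + m)‖) atTop
          (𝓝 ‖xbar - x (N+m)‖) := (hψlim.sub tendsto_const_nhds).norm
      have hev : ∀ᶠ j in atTop, ‖x (ψ j + 1) - x (N+m)‖ ≤ s * σ^m * (1-σ)⁻¹ := by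
        filter_upwards [hψtop.eventually_ge_atTop (N + m)] with j hj
        have := htel m (ψ j + 1 - (N+m))
        rwa [show N + m + (ψ j + 1 - (N+m)) = ψ j + 1 by omega] at this
      have := le_of_tendsto hlim2 hev
      rwa [norm_sub_rev] at this
    set M : ℝ := s * (1-σ)⁻¹ / σ^N with hMdef
    have hM : 0 < M := by positivity
    have hbound : ∀ k, N ≤ k → ‖x k - xbar‖ ≤ M * σ^k := by
      intro k hk
      have hh := htail (k - N)
      rw [show N + (k - N) = k by omega] at hh
      have hpow : σ^(k-N) * σ^N = σ^k := by rw [← pow_add]; congr 1; omega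
      have he : M * σ^k = s * σ^(k-N) * (1-σ)⁻¹ := by
        rw [hMdef, ← hpow]
        field_simp
      rw [he]
      exact hh
    constructor
    · rw [← tendsto_sub_nhds_zero_iff]
      have hgeo : Tendsto (fun k => M * σ^k) atTop (𝓝 0) := by
        have := (tendsto_pow_atTop_nhds_zero_of_lt_one hσ0.le hσ1).const_mul M
        simpa using this
      apply squeeze_zero_norm' _ hgeo
      filter_upwards [eventually_ge_atTop N] with k hk using hbound k hk
    · refine ⟨M, hM, σ, hσ0, hσ1, ?_⟩
      filter_upwards [eventually_ge_atTop N] with k hk using hbound k hk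

end
end

section
/- Let f := ℓ + P, where ℓ : ℝ^n → (−∞,∞] is a proper closed function with open domain that is continuously differentiable on dom ℓ, and P : ℝ^n → (−∞,∞] is a proper closed polyhedral function, with dom ℓ ∩ dom P ≠ ∅. Let K := {(x,s) ∈ ℝ^n × ℝ : s ≥ P(x)}. Then there exists C > 0 such that for every x ∈ dom f, ‖Proj_K[(x, P(x)) − (∇ℓ(x), 1)] − (x, P(x))‖ ≤ C‖prox_P(x − ∇ℓ(x)) − x‖. -/
open Filter Topology Metric Set
open scoped RealInnerProductSpace

noncomputable section

variable {E : Type*} [NormedAddCommGroup E] [InnerProductSpace ℝ E]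

/-- Parallelogram-type strong minimality trick. -/
lemma quadTrick {H : Type*} [NormedAddCommGroup H] [InnerProductSpace ℝ H]
    (z m y : H) (am ay amid : ℝ)
    (hmid : amid ≤ (am + ay) / 2)
    (hobj : am + 1/2 * ‖m - z‖^2 ≤ amid + 1/2 * ‖(1/2 : ℝ) • (m + y) - z‖^2) :
    am + 1/2 * ‖m - z‖^2 + 1/4 * ‖y - m‖^2 ≤ ay + 1/2 * ‖y - z‖^2 := by
  have hmidpt : (1/2 : ℝ) • (m + y) - z = (1/2 : ℝ) • ((m - z) + (y - z)) := by
    rw [smul_add, smul_add]; module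
  have hpar := parallelogram_law_with_norm ℝ (m - z) (y - z)
  have h1 : ‖(1/2 : ℝ) • (m + y) - z‖^2 = (1/4) * ‖(m - z) + (y - z)‖^2 := by
    rw [hmidpt, norm_smul]
    simp [Real.norm_eq_abs]
    ring
  have h2 : (m - z) - (y - z) = m - y := by abel
  have h3 : ‖y - m‖ = ‖m - y‖ := norm_sub_rev _ _
  rw [h1] at hobj
  rw [h2] at hpar
  rw [h3]
  nlinarith [hpar, hobj, hmid]


lemma keyIneq (s t p A B : ℝ) (hA : |s - t| ≤ A) (hB : |t - p| ≤ B) :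
    (s - t) - (1/2 * (max (s - p + 1) 0)^2 - 1/2 * (max (t - p + 1) 0)^2) ≤ A * B := by
  obtain ⟨hA1, hA2⟩ := abs_le.mp hA
  obtain ⟨hB1, hB2⟩ := abs_le.mp hB
  have hA0 : 0 ≤ A := le_trans (abs_nonneg _) hA
  have hB0 : 0 ≤ B := le_trans (abs_nonneg _) hB
  rcases le_total (s - p + 1) 0 with h1 | h1 <;> rcases le_total (t - p + 1) 0 with h2 | h2
  · rw [max_eq_right h1, max_eq_right h2]
    nlinarith
  · rw [max_eq_right h1, max_eq_left h2]
    rcases le_total (t - p + 1) 1 with h3 | h3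
    · nlinarith
    · nlinarith [mul_le_mul hA2 hB2 (by linarith) hA0]
  · rw [max_eq_left h1, max_eq_right h2]
    nlinarith
  · rw [max_eq_left h1, max_eq_left h2]
    rcases le_total s t with h3 | h3
    · rcases le_total ((s - p + 1) + (t - p + 1)) 2 with h4 | h4
      · nlinarith
      · nlinarith [mul_le_mul (show t - s ≤ A by linarith) hB2
          (show (0:ℝ) ≤ t - p by linarith) hA0]
    · rcases le_total ((s - p + 1) + (t - p + 1)) 2 with h4 | h4
      · nlinarith [mul_le_mul hA2 (show p - t ≤ B by linarith)
          (show (0:ℝ) ≤ p - t by linarith) hA0]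
      · nlinarith
  
lemma psiMid (a b m c : ℝ) (h : m ≤ (a + b)/2) :
    (max (m - c) 0)^2 ≤ ((max (a - c) 0)^2 + (max (b - c) 0)^2)/2 := by
  have h1 : max (m - c) 0 ≤ (max (a - c) 0 + max (b - c) 0)/2 := by
    rcases le_total (m - c) 0 with h2 | h2
    · rw [max_eq_right h2]
      have := le_max_right (a - c) 0
      have := le_max_right (b - c) 0
      linarith
    · rw [max_eq_left h2]
      have := le_max_left (a - c) 0
      have := le_max_left (b - c) 0
      linarith
  have h0 : 0 ≤ max (m - c) 0 := le_max_right _ _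
  nlinarith [sq_nonneg (max (a - c) 0 - max (b - c) 0)]

lemma maxChar (σ β : ℝ) (h1 : σ ≤ β) (h2 : β^2 ≤ (max σ 0)^2) : β = max σ 0 := by
  rcases le_total σ 0 with h | h
  · rw [max_eq_right h] at h2 ⊢
    nlinarith
  · rw [max_eq_left h] at h2 ⊢
    nlinarith

lemma absMaxNegOne (a : ℝ) : |max a (-1)| ≤ |a| := by
  rcases le_total a (-1) with h | h
  · rw [max_eq_right h]
    rw [abs_of_nonpos (by norm_num), abs_of_nonpos (by linarith)]
    linarith
  · rw [max_eq_left h]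

/-- Structure of a polyhedral function: midpoint convexity plus Lipschitz on domain. -/
lemma polyStruct [FiniteDimensional ℝ E] (P : E → EReal) (hP : IsPolyhedralFn P) :
    (∀ a b, P a < ⊤ → P b < ⊤ →
      P ((1/2 : ℝ) • (a + b)) ≤ ((((P a).toReal + (P b).toReal)/2 : ℝ) : EReal)) ∧
    ∃ L : ℝ, 0 ≤ L ∧ ∀ a b, P a < ⊤ → P b < ⊤ →
      |(P a).toReal - (P b).toReal| ≤ L * ‖a - b‖ := by
  obtain ⟨⟨hnb, hne⟩, _, k, φ, bb, hS⟩ := hP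
  have hmem : ∀ (y : E) (t : ℝ), P y ≤ (t : EReal) ↔ ∀ i, φ i (y, t) ≤ bb i := by
    intro y t
    exact Set.ext_iff.mp hS (y, t)
  have hcoe : ∀ y : E, P y < ⊤ → P y = (((P y).toReal : ℝ) : EReal) := by
    intro y hy
    exact (EReal.coe_toReal hy.ne (hnb y)).symm
  have hself : ∀ y : E, P y < ⊤ → ∀ i, φ i (y, (P y).toReal) ≤ bb i := by
    intro y hy
    exact (hmem y _).mp (le_of_eq (hcoe y hy))
  set c : Fin k → ℝ := fun i => φ i (0, 1) with hc
  have hsplit : ∀ (i : Fin k) (y : E) (t : ℝ), φ i (y, t) = φ i (y, 0) + t * c i := by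
    intro i y t
    have h : (y, t) = (y, (0:ℝ)) + t • ((0 : E), (1:ℝ)) := by
      simp [Prod.ext_iff]
    rw [h, map_add, map_smul, smul_eq_mul]
  -- midpoint property
  have hmid : ∀ a b, P a < ⊤ → P b < ⊤ →
      P ((1/2 : ℝ) • (a + b)) ≤ ((((P a).toReal + (P b).toReal)/2 : ℝ) : EReal) := by
    intro a b ha hb
    rw [hmem]
    intro i
    have h1 := hself a ha i
    have h2 := hself b hb i
    have h : ((1/2 : ℝ) • (a + b), ((P a).toReal + (P b).toReal)/2)
        = (1/2 : ℝ) • ((a, (P a).toReal) + (b, (P b).toReal)) := by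
      simp [Prod.ext_iff, Prod.smul_def, smul_add]
      ring
    rw [h, map_smul, map_add, smul_eq_mul]
    linarith
  refine ⟨hmid, ?_⟩
  obtain ⟨y₀, hy₀⟩ := hne
  obtain ⟨p₀, he₀⟩ : ∃ p₀ : ℝ, P y₀ = (p₀ : EReal) := ⟨_, hcoe y₀ hy₀⟩
  have hself₀ : ∀ i, φ i (y₀, p₀) ≤ bb i := (hmem y₀ p₀).mp (le_of_eq he₀)
  have hcnp : ∀ i, c i ≤ 0 := by
    intro i
    by_contra h
    push_neg at h
    set m := max 0 ((bb i - φ i (y₀, 0) - p₀ * c i)/(c i) + 1) with hm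
    have hm0 : (0:ℝ) ≤ m := le_max_left _ _
    have hmge : (bb i - φ i (y₀, 0) - p₀ * c i)/(c i) + 1 ≤ m := le_max_right _ _
    have hPy : P y₀ ≤ ((p₀ + m : ℝ) : EReal) := by
      rw [he₀]
      exact_mod_cast EReal.coe_le_coe_iff.mpr (by linarith)
    have hcon := (hmem y₀ _).mp hPy i
    rw [hsplit] at hcon
    rw [div_add' _ _ _ (ne_of_gt h), div_le_iff₀ h] at hmge
    nlinarith
  set T : Finset (Fin k) := Finset.univ.filter (fun i => c i < 0) with hT
  have hczero : ∀ i, i ∉ T → c i = 0 := by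
    intro i hi
    rcases lt_or_eq_of_le (hcnp i) with h | h
    · exact absurd (by simp [hT, h] : i ∈ T) hi
    · exact h
  have hTne : T.Nonempty := by
    by_contra hTe
    rw [Finset.not_nonempty_iff_eq_empty] at hTe
    have hall : P y₀ ≤ ((p₀ - 1 : ℝ) : EReal) := by
      rw [hmem]
      intro i
      have h1 := hself₀ i
      have hc0 : c i = 0 := hczero i (by rw [hTe]; exact Finset.notMem_empty i)
      rw [hsplit] at h1 ⊢
      rw [hc0] at h1 ⊢
      linarith
    rw [he₀, EReal.coe_le_coe_iff] at hall
    linarith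
  -- affine pieces
  set g : Fin k → E → ℝ := fun i y => (φ i (y, 0) - bb i)/(-(c i)) with hg
  have hgle : ∀ y, P y < ⊤ → ∀ i ∈ T, g i y ≤ (P y).toReal := by
    intro y hy i hi
    have hci : c i < 0 := by
      simp only [hT, Finset.mem_filter] at hi
      exact hi.2
    have h1 := hself y hy i
    rw [hsplit] at h1
    rw [hg, div_le_iff₀ (by linarith : (0:ℝ) < -(c i))]
    nlinarith
  have hgmax : ∀ y, P y < ⊤ → (P y).toReal ≤ T.sup' hTne (fun i => g i y) := by
    intro y hy
    have hmem2 : P y ≤ ((T.sup' hTne (fun i => g i y) : ℝ) : EReal) := by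
      rw [hmem]
      intro i
      rw [hsplit i y _]
      by_cases hi : i ∈ T
      · have hci : c i < 0 := by
          simp only [hT, Finset.mem_filter] at hi
          exact hi.2
        have h1 : g i y ≤ T.sup' hTne (fun i => g i y) := Finset.le_sup' (fun i => g i y) hi
        have h2 : T.sup' hTne (fun i => g i y) * c i ≤ g i y * c i :=
          mul_le_mul_of_nonpos_right h1 (le_of_lt hci)
        have h3 : g i y * c i = -(φ i (y, 0) - bb i) := by
          have hcne : c i ≠ 0 := ne_of_lt hci
          rw [hg]
          field_simp
        linarith
      · have hci : c i = 0 := hczero i hi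
        have h1 := hself y hy i
        rw [hsplit] at h1
        rw [hci] at h1 ⊢
        linarith
    rw [hcoe y hy] at hmem2
    exact EReal.coe_le_coe_iff.mp hmem2
  -- Lipschitz constants
  set lm : Fin k → (E →ₗ[ℝ] ℝ) := fun i => (φ i).comp (LinearMap.inl ℝ E ℝ) with hlm
  have hlmval : ∀ i y, lm i y = φ i (y, 0) := by
    intro i y
    rfl
  set Lf : Fin k → ℝ := fun i => ‖(LinearMap.toContinuousLinearMap (lm i) : E →L[ℝ] ℝ)‖ / (-(c i))
    with hLf
  set L : ℝ := T.sup' hTne Lf with hL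
  have hLnn : 0 ≤ L := by
    obtain ⟨i₀, hi₀⟩ := hTne
    have hci : c i₀ < 0 := by
      simp only [hT, Finset.mem_filter] at hi₀
      exact hi₀.2
    have h : (0:ℝ) ≤ Lf i₀ := div_nonneg (norm_nonneg _) (by linarith)
    exact le_trans h (Finset.le_sup' Lf hi₀)
  refine ⟨L, hLnn, ?_⟩
  have hone : ∀ a b, P a < ⊤ → P b < ⊤ → (P a).toReal - (P b).toReal ≤ L * ‖a - b‖ := by
    intro a b ha hb
    obtain ⟨i, hi, hieq⟩ := Finset.exists_mem_eq_sup' hTne (fun i => g i a)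
    have hci : c i < 0 := by
      simp only [hT, Finset.mem_filter] at hi
      exact hi.2
    have hcpos : (0:ℝ) < -(c i) := by linarith
    have h1 : (P a).toReal ≤ g i a := by
      rw [← hieq]
      exact hgmax a ha
    have h2 : g i b ≤ (P b).toReal := hgle b hb i hi
    have h3 : g i a - g i b = (lm i (a - b)) / (-(c i)) := by
      have hcne : c i ≠ 0 := ne_of_lt hci
      rw [hg, map_sub, hlmval, hlmval]
      field_simp
      ring
    have h4 : lm i (a - b) ≤ ‖(LinearMap.toContinuousLinearMap (lm i) : E →L[ℝ] ℝ)‖ * ‖a - b‖ := by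
      have h5 := (LinearMap.toContinuousLinearMap (lm i)).le_opNorm (a - b)
      have heq : (LinearMap.toContinuousLinearMap (lm i)) (a - b) = lm i (a - b) := rfl
      rw [heq] at h5
      calc lm i (a - b) ≤ |lm i (a - b)| := le_abs_self _
        _ = ‖lm i (a - b)‖ := (Real.norm_eq_abs _).symm
        _ ≤ _ := h5
    have h5 : (lm i (a - b)) / (-(c i)) ≤ Lf i * ‖a - b‖ := by
      have h6 := (div_le_div_iff_of_pos_right hcpos).mpr h4
      rw [hLf, div_mul_eq_mul_div]
      exact h6
    have h6 : Lf i ≤ L := Finset.le_sup' Lf hi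
    have h7 : Lf i * ‖a - b‖ ≤ L * ‖a - b‖ :=
      mul_le_mul_of_nonneg_right h6 (norm_nonneg _)
    linarith
  intro a b ha hb
  rw [abs_le]
  constructor
  · have h := hone b a hb ha
    rw [norm_sub_rev] at h
    linarith
  · exact hone a b ha hb


lemma normPair {n : ℕ} (a b : EuclideanSpace ℝ (Fin n)) (s t : ℝ) :
    ‖(WithLp.equiv 2 (EuclideanSpace ℝ (Fin n) × ℝ)).symm (a, s)
      - (WithLp.equiv 2 (EuclideanSpace ℝ (Fin n) × ℝ)).symm (b, t)‖^2
      = ‖a - b‖^2 + (s - t)^2 := by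
  rw [WithLp.equiv_symm_apply, ← WithLp.toLp_sub, WithLp.prod_norm_sq_eq_of_L2]
  simp [Prod.mk_sub_mk, sq_abs]

lemma normPt {n : ℕ} (q : WithLp 2 (EuclideanSpace ℝ (Fin n) × ℝ))
    (b : EuclideanSpace ℝ (Fin n)) (t : ℝ) :
    ‖q - (WithLp.equiv 2 (EuclideanSpace ℝ (Fin n) × ℝ)).symm (b, t)‖^2
      = ‖q.fst - b‖^2 + (q.snd - t)^2 := by
  rw [WithLp.prod_norm_sq_eq_of_L2]
  simp [sq_abs]


set_option maxHeartbeats 1000000 in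
/-- comparison between the projected gradient step on the epigraph of `P`
and the proximal gradient step. -/
theorem stmt_19 {n : ℕ} (l : EuclideanSpace ℝ (Fin n) → EReal)
    (hlproper : ProperFn l) (hlclosed : LowerSemicontinuous l)
    (hopen : IsOpen (edomain l))
    (l' : EuclideanSpace ℝ (Fin n) → EuclideanSpace ℝ (Fin n))
    (hgrad : ∀ x ∈ edomain l, HasGradientAt (fun y => (l y).toReal) (l' x) x)
    (hgradcont : ContinuousOn l' (edomain l))
    (P : EuclideanSpace ℝ (Fin n) → EReal) (hP : IsPolyhedralFn P)
    (hcap : (edomain l ∩ edomain P).Nonempty)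
    (f : EuclideanSpace ℝ (Fin n) → EReal) (hf : ∀ x, f x = l x + P x)
    (K : Set (WithLp 2 (EuclideanSpace ℝ (Fin n) × ℝ)))
    (hK : K = {p | P (WithLp.equiv 2 (EuclideanSpace ℝ (Fin n) × ℝ) p).1
      ≤ (((WithLp.equiv 2 (EuclideanSpace ℝ (Fin n) × ℝ) p).2 : ℝ) : EReal)}) :
    ∃ C > (0:ℝ), ∀ x ∈ edomain f, ∀ w : EuclideanSpace ℝ (Fin n),
      IsProxPt P (x - l' x) w →
      ∀ pr : WithLp 2 (EuclideanSpace ℝ (Fin n) × ℝ), pr ∈ K →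
        (∀ s ∈ K, dist ((WithLp.equiv 2 (EuclideanSpace ℝ (Fin n) × ℝ)).symm
            (x - l' x, (P x).toReal - 1)) pr
          ≤ dist ((WithLp.equiv 2 (EuclideanSpace ℝ (Fin n) × ℝ)).symm
            (x - l' x, (P x).toReal - 1)) s) →
        ‖pr - (WithLp.equiv 2 (EuclideanSpace ℝ (Fin n) × ℝ)).symm (x, (P x).toReal)‖
          ≤ C * ‖w - x‖ := by
  obtain ⟨hmidP, L, hL0, hLip⟩ := polyStruct P hP
  have hPnb : ∀ y, P y ≠ ⊥ := hP.1.1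
  have hcoe : ∀ y, P y < ⊤ → P y = (((P y).toReal : ℝ) : EReal) := fun y hy =>
    (EReal.coe_toReal hy.ne (hPnb y)).symm
  refine ⟨(2*L^2+1)*(1+L), by nlinarith, ?_⟩
  intro x hx w hw pr hprK hprmin
  set z := x - l' x with hz
  set p := (P x).toReal with hp
  -- x is in the domain of P
  have hxP : P x < ⊤ := by
    by_contra h
    push_neg at h
    have h1 : P x = ⊤ := top_le_iff.mp h
    have h2 : f x = ⊤ := by
      rw [hf x, h1, EReal.add_top_of_ne_bot (hlproper.1 x)]
    have hx' : f x < ⊤ := hx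
    exact absurd h2 hx'.ne
  -- w is in the domain of P
  have hwP : P w < ⊤ := by
    by_contra h
    push_neg at h
    have h1 : P w = ⊤ := top_le_iff.mp h
    have h2 := hw x
    rw [h1, EReal.top_add_coe, hcoe x hxP, ← EReal.coe_add] at h2
    exact absurd h2 (EReal.coe_lt_top _).not_ge
  -- real-valued prox inequality
  have hwR : ∀ y, P y < ⊤ →
      (P w).toReal + 1/2 * ‖w - z‖^2 ≤ (P y).toReal + 1/2 * ‖y - z‖^2 := by
    intro y hy
    have h2 := hw y
    rw [hcoe w hwP, hcoe y hy, ← EReal.coe_add, ← EReal.coe_add,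
      EReal.coe_le_coe_iff] at h2
    exact h2
  -- coordinates of pr
  set v := pr.fst with hv
  set r2 := pr.snd with hr2d
  have hprK' : P v ≤ ((r2 : ℝ) : EReal) := by
    rw [hK] at hprK
    simpa [WithLp.equiv_apply] using hprK
  have hvP : P v < ⊤ := lt_of_le_of_lt hprK' (EReal.coe_lt_top _)
  set s := (P v).toReal with hs
  set tw := (P w).toReal with htw
  have hsle : s ≤ r2 := by
    have h2 := hprK'
    rw [hcoe v hvP, EReal.coe_le_coe_iff] at h2
    exact h2
  -- minimality of pr in real terms
  have hmin : ∀ (y : EuclideanSpace ℝ (Fin n)) (t : ℝ), P y ≤ (t : EReal) →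
      ‖v - z‖^2 + (r2 - (p-1))^2 ≤ ‖y - z‖^2 + (t - (p-1))^2 := by
    intro y t hyt
    have hyK : (WithLp.equiv 2 (EuclideanSpace ℝ (Fin n) × ℝ)).symm (y, t) ∈ K := by
      rw [hK]
      simpa using hyt
    have h2 := hprmin _ hyK
    rw [dist_eq_norm, dist_eq_norm] at h2
    have h3 : ‖(WithLp.equiv 2 (EuclideanSpace ℝ (Fin n) × ℝ)).symm (z, p-1) - pr‖^2
        ≤ ‖(WithLp.equiv 2 (EuclideanSpace ℝ (Fin n) × ℝ)).symm (z, p-1)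
          - (WithLp.equiv 2 (EuclideanSpace ℝ (Fin n) × ℝ)).symm (y, t)‖^2 :=
      pow_le_pow_left₀ (norm_nonneg _) h2 2
    rw [norm_sub_rev, normPt, normPair] at h3
    have h4 : (z - y = -(y - z)) := by abel
    rw [h4, norm_neg] at h3
    nlinarith [h3]
  -- the second coordinate of pr
  have hr2 : r2 = max s (p - 1) := by
    have h1 := hmin v (max s (p-1)) (by
      rw [hcoe v hvP]
      exact EReal.coe_le_coe_iff.mpr (le_max_left _ _))
    have h3 : max s (p-1) - (p-1) = max (s - (p-1)) 0 := by
      rcases le_total s (p-1) with h | h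
      · rw [max_eq_right h, max_eq_right (by linarith : s - (p-1) ≤ 0)]
        ring
      · rw [max_eq_left h, max_eq_left (by linarith : (0:ℝ) ≤ s - (p-1))]
    have h4 := maxChar (s - (p-1)) (r2 - (p-1)) (by linarith) (by rw [← h3]; nlinarith [h1])
    rw [← h3] at h4
    linarith
  -- F-minimality for the first coordinate of pr
  have hF : ∀ y, P y < ⊤ →
      1/2 * ‖v - z‖^2 + 1/2 * (max (s - p + 1) 0)^2
        ≤ 1/2 * ‖y - z‖^2 + 1/2 * (max ((P y).toReal - p + 1) 0)^2 := by
    intro y hy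
    have h1 := hmin y (max (P y).toReal (p-1)) (by
      rw [hcoe y hy]
      exact EReal.coe_le_coe_iff.mpr (le_max_left _ _))
    have h3 : ∀ u : ℝ, max u (p-1) - (p-1) = max (u - p + 1) 0 := by
      intro u
      rcases le_total u (p-1) with h | h
      · rw [max_eq_right h, max_eq_right (by linarith : u - p + 1 ≤ 0)]
        ring
      · rw [max_eq_left h, max_eq_left (by linarith : (0:ℝ) ≤ u - p + 1)]
        ring
    have h5 : r2 - (p-1) = max (s - p + 1) 0 := by
      rw [hr2, h3 s]
    have h6 : max (P y).toReal (p-1) - (p-1) = max ((P y).toReal - p + 1) 0 := h3 _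
    rw [← h5, ← h6]
    linarith
  -- midpoint
  set md := (1/2 : ℝ) • (w + v) with hmd
  have hmd_le : P md ≤ ((((P w).toReal + (P v).toReal)/2 : ℝ) : EReal) := hmidP w v hwP hvP
  have hmd_dom : P md < ⊤ := lt_of_le_of_lt hmd_le (EReal.coe_lt_top _)
  have hmd_val : (P md).toReal ≤ (tw + s)/2 := by
    have h1 := EReal.toReal_le_toReal hmd_le (hPnb md) (EReal.coe_ne_top _)
    rwa [EReal.toReal_coe] at h1
  -- strong minimality for the prox point
  have hG := quadTrick z w v tw s ((P md).toReal) hmd_val (hwR md hmd_dom)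
  -- strong minimality for the projection point
  have hFq := quadTrick z v w (1/2 * (max (s - p + 1) 0)^2)
      (1/2 * (max (tw - p + 1) 0)^2) (1/2 * (max ((P md).toReal - p + 1) 0)^2)
      (by
        have hpm := psiMid s tw ((P md).toReal) (p-1) (by linarith [hmd_val])
        rw [(by ring : (P md).toReal - (p-1) = (P md).toReal - p + 1),
          (by ring : s - (p-1) = s - p + 1), (by ring : tw - (p-1) = tw - p + 1)] at hpm
        linarith)
      (by
        have h1 := hF md hmd_dom
        have h2 : (1/2 : ℝ) • (v + w) = md := by rw [hmd, add_comm]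
        rw [h2]
        linarith)
  -- the key squared bound
  have hvw : ‖w - v‖ = ‖v - w‖ := norm_sub_rev _ _
  have hsum : 1/2 * ‖v - w‖^2 ≤ (s - tw)
      - (1/2 * (max (s - p + 1) 0)^2 - 1/2 * (max (tw - p + 1) 0)^2) := by
    have hvw2 : ‖w - v‖^2 = ‖v - w‖^2 := by rw [hvw]
    linarith [hG, hFq, hvw2]
  have hA : |s - tw| ≤ L * ‖v - w‖ := hLip v w hvP hwP
  have hB : |tw - p| ≤ L * ‖w - x‖ := hLip w x hwP hxP
  have hkey := keyIneq s tw p (L * ‖v - w‖) (L * ‖w - x‖) hA hB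
  have hX : ‖v - w‖ ≤ 2*L^2*‖w - x‖ := by
    rcases eq_or_lt_of_le (norm_nonneg (v - w)) with h | h
    · rw [← h]
      positivity
    · have h2 : ‖v - w‖^2 ≤ 2*((L*‖v - w‖) * (L*‖w - x‖)) := by linarith [hsum, hkey]
      have h3 : 2*((L*‖v - w‖) * (L*‖w - x‖)) = (2*L^2*‖w - x‖)*‖v - w‖ := by ring
      have h4 : ‖v - w‖ * ‖v - w‖ ≤ (2*L^2*‖w - x‖) * ‖v - w‖ := by
        rw [pow_two] at h2
        linarith [h2, h3]
      exact le_of_mul_le_mul_right h4 h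
  have htri : ‖v - x‖ ≤ ‖v - w‖ + ‖w - x‖ := by
    have h : v - x = (v - w) + (w - x) := by abel
    rw [h]
    exact norm_add_le _ _
  have hvx : ‖v - x‖ ≤ (2*L^2+1)*‖w - x‖ := by nlinarith [hX, htri]
  have hsp : |s - p| ≤ L * ‖v - x‖ := hLip v x hvP hxP
  have hr2p : |r2 - p| ≤ |s - p| := by
    have h1 : r2 - p = max (s - p) (-1) := by
      rw [hr2]
      rcases le_total s (p-1) with h | h
      · rw [max_eq_right h, max_eq_right (by linarith : s - p ≤ -1)]
        ring
      · rw [max_eq_left h, max_eq_left (by linarith : (-1:ℝ) ≤ s - p)]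
    rw [h1]
    exact absMaxNegOne _
  have hNN : (0:ℝ) ≤ ‖w - x‖ := norm_nonneg _
  have h6 : |r2 - p| ≤ L * ((2*L^2+1)*‖w - x‖) := by
    calc |r2 - p| ≤ |s - p| := hr2p
      _ ≤ L * ‖v - x‖ := hsp
      _ ≤ L * ((2*L^2+1)*‖w - x‖) := mul_le_mul_of_nonneg_left hvx hL0
  have hn2 : ‖pr - (WithLp.equiv 2 (EuclideanSpace ℝ (Fin n) × ℝ)).symm (x, p)‖^2
      = ‖v - x‖^2 + (r2 - p)^2 := normPt pr x p
  have h7 : ‖pr - (WithLp.equiv 2 (EuclideanSpace ℝ (Fin n) × ℝ)).symm (x, p)‖^2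
      ≤ ((2*L^2+1)*(1+L) * ‖w - x‖)^2 := by
    rw [hn2]
    nlinarith [hvx, h6, abs_nonneg (r2 - p), sq_abs (r2 - p), norm_nonneg (v - x),
      mul_nonneg hL0 hNN, mul_nonneg (mul_nonneg hL0 hL0) hNN]
  have hC0 : (0:ℝ) ≤ (2*L^2+1)*(1+L) := by nlinarith
  exact (pow_le_pow_iff_left₀ (norm_nonneg _) (mul_nonneg hC0 hNN) two_ne_zero).mp h7

end
end
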